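/- With v an a-Sturmian word written v = a^{l₀} b a^{l+ε₁} b a^{l+ε₂} b ⋯ and F the cellular automaton of radius l+1 mapping a^{l+1} to a and every other word of length l+1 to b, the image word F(v) is 2-balanced: for every letter x and all factors v₁, v₂ of F(v) of equal length, ||v₁|_x − |v₂|_x| ≤ 2, and the bound 2 is attained. -/

import Mathlib

/-- The window of length `n` of an infinite word `u` starting at position `i`. -/
def window {A : Type*} (u : ℕ → A) (i n : ℕ) : List A :=
  (List.range n).map (fun j => u (i + j))

/-- `w` is a (finite) factor of the infinite word `u`. -/
def IsFactor {A : Type*} (u : ℕ → A) (w : List A) : Prop :=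
  ∃ i, w = window u i w.length

/-- The cellular automaton with local rule `f` of radius `r`, on finite words. -/
def caF {A B : Type*} (f : List A → B) (r : ℕ) (w : List A) : List B :=
  (List.range (w.length + 1 - r)).map (fun i => f ((w.drop i).take r))

/-- The cellular automaton with local rule `f` of radius `r`, on infinite words. -/
def caFInf {A B : Type*} (f : List A → B) (r : ℕ) (u : ℕ → A) : ℕ → B :=
  fun i => f (window u i r)

/-- The set of factors of length `n` of `u`. -/
def factorsOfLen {A : Type*} (u : ℕ → A) (n : ℕ) : Set (List A) :=
  {w | w.length = n ∧ IsFactor u w}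

/-- The factor complexity function. -/
noncomputable def complexity {A : Type*} (u : ℕ → A) (n : ℕ) : ℕ :=
  Nat.card (factorsOfLen u n)

/-- The prefix of the a-Sturmian word `a^(l₀) b a^(l+ε₁) b ⋯ a^(l+εₙ) b`. -/
def sturmPrefix (l₀ l : ℕ) (ε : ℕ → ℕ) (n : ℕ) : List Bool :=
  (List.replicate l₀ true ++ [false]) ++
    ((List.range n).map (fun i => List.replicate (l + ε (i + 1)) true ++ [false])).flatten

/-- The local rule sending `a^(l+1)` to `a` and every other block to `b`
(`true` = a, `false` = b). -/
def sturmRule (l : ℕ) : List Bool → Bool :=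
  fun w => if w = List.replicate (l + 1) true then true else false

namespace StuProof
open List

variable {A : Type*}

@[simp] lemma window_length (u : ℕ → A) (i n : ℕ) : (window u i n).length = n := by
  simp [window]

lemma window_get (u : ℕ → A) (i n d : ℕ) (hd : d < n) :
    (window u i n)[d]'(by simpa using hd) = u (i + d) := by
  simp [window]

lemma window_append (u : ℕ → A) (i a b : ℕ) :
    window u i (a + b) = window u i a ++ window u (i + a) b := by
  apply List.ext_getElem
  · simp
  · intro d h1 h2
    simp only [window_length] at h1
    rcases Nat.lt_or_ge d a with h | h
    · rw [window_get u i (a+b) d (by omega), List.getElem_append_left (by simpa using h),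
        window_get u i a d h]
    · rw [window_get u i (a+b) d (by omega), List.getElem_append_right (by simpa using h)]
      simp only [window_length]
      rw [window_get u (i+a) b (d - a) (by omega)]
      congr 1
      omega

lemma window_one (u : ℕ → A) (i : ℕ) : window u i 1 = [u i] := by
  simp [window, List.range_succ]

lemma window_succ (u : ℕ → A) (i n : ℕ) :
    window u i (n + 1) = window u i n ++ [u (i + n)] := by
  rw [window_append, window_one]

lemma window_cons (u : ℕ → A) (i n : ℕ) :
    window u i (n + 1) = u i :: window u (i + 1) n := by
  have h : n + 1 = 1 + n := by omega
  rw [h, window_append, window_one]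
  rfl

lemma window_zero (u : ℕ → A) (i : ℕ) : window u i 0 = [] := by simp [window]

lemma isFactor_window (u : ℕ → A) (i n : ℕ) : IsFactor u (window u i n) := by
  exact ⟨i, by rw [window_length]⟩

lemma mem_factorsOfLen {u : ℕ → A} {w : List A} {n : ℕ} :
    w ∈ factorsOfLen u n ↔ w.length = n ∧ ∃ i, w = window u i n := by
  constructor
  · rintro ⟨h1, i, h2⟩
    exact ⟨h1, i, by rwa [h1] at h2⟩
  · rintro ⟨h1, i, h2⟩
    exact ⟨h1, i, by rwa [h1]⟩

lemma window_mem_factorsOfLen (u : ℕ → A) (i n : ℕ) :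
    window u i n ∈ factorsOfLen u n :=
  mem_factorsOfLen.2 ⟨window_length u i n, i, rfl⟩

lemma factorsOfLen_nonempty (u : ℕ → A) (n : ℕ) : (factorsOfLen u n).Nonempty :=
  ⟨window u 0 n, window_mem_factorsOfLen u 0 n⟩

/-- A sub-window of a window is a window. -/
lemma window_sub (u : ℕ → A) (i n a b : ℕ) (h : a + b ≤ n) :
    window u (i + a) b = ((window u i n).drop a).take b := by
  apply List.ext_getElem
  · simp; omega
  · intro d h1 h2
    simp only [window_length] at h1
    rw [window_get u (i+a) b d h1, List.getElem_take, List.getElem_drop,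
      window_get u i n (a + d) (by omega)]
    congr 1
    omega

end StuProof

namespace StuProof
open List

variable {A : Type*}

lemma factorsOfLen_zero (u : ℕ → A) : factorsOfLen u 0 = {([] : List A)} := by
  ext w
  simp only [Set.mem_singleton_iff, mem_factorsOfLen, List.length_eq_zero_iff]
  constructor
  · rintro ⟨h, -⟩; exact h
  · rintro rfl; exact ⟨rfl, 0, by simp [window]⟩

lemma window_take (u : ℕ → A) (i n a : ℕ) (h : a ≤ n) :
    (window u i n).take a = window u i a := by
  have : n = a + (n - a) := by omega
  rw [this, window_append, List.take_left' (window_length u i a)]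

lemma window_drop (u : ℕ → A) (i n a : ℕ) (h : a ≤ n) :
    (window u i n).drop a = window u (i + a) (n - a) := by
  conv_lhs => rw [show n = a + (n - a) by omega]
  rw [window_append, List.drop_left' (window_length u i a)]

lemma take_mem_factorsOfLen {u : ℕ → A} {w : List A} {n : ℕ}
    (h : w ∈ factorsOfLen u (n + 1)) : w.take n ∈ factorsOfLen u n := by
  obtain ⟨hl, i, rfl⟩ := mem_factorsOfLen.1 h
  rw [window_take u i (n+1) n (by omega)]
  exact window_mem_factorsOfLen u i n

lemma exists_ext {u : ℕ → A} {w : List A} {n : ℕ}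
    (h : w ∈ factorsOfLen u n) : ∃ b, w ++ [b] ∈ factorsOfLen u (n + 1) := by
  obtain ⟨hl, i, rfl⟩ := mem_factorsOfLen.1 h
  exact ⟨u (i + n), by rw [← window_succ]; exact window_mem_factorsOfLen u i (n+1)⟩

lemma factorsOfLen_subset_image_take (u : ℕ → A) (n : ℕ) :
    factorsOfLen u n ⊆ (fun w => List.take n w) '' (factorsOfLen u (n + 1)) := by
  intro w hw
  obtain ⟨b, hb⟩ := exists_ext hw
  refine ⟨w ++ [b], hb, ?_⟩
  have : w.length = n := (mem_factorsOfLen.1 hw).1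
  simp [List.take_left' this]

lemma factorsOfLen_finite_of (u : ℕ → A) (n : ℕ)
    (hf : (factorsOfLen u (n + 1)).Finite) : (factorsOfLen u n).Finite :=
  Set.Finite.subset (Set.Finite.image _ hf) (factorsOfLen_subset_image_take u n)

lemma ncard_factorsOfLen_mono (u : ℕ → A) (n : ℕ)
    (hf : (factorsOfLen u (n + 1)).Finite) :
    (factorsOfLen u n).ncard ≤ (factorsOfLen u (n + 1)).ncard := by
  calc (factorsOfLen u n).ncard
      ≤ ((fun w => List.take n w) '' (factorsOfLen u (n + 1))).ncard :=
        Set.ncard_le_ncard (factorsOfLen_subset_image_take u n) (Set.Finite.image _ hf)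
    _ ≤ (factorsOfLen u (n + 1)).ncard := Set.ncard_image_le hf

lemma complexity_eq_ncard (u : ℕ → A) (n : ℕ) :
    complexity u n = (factorsOfLen u n).ncard := by
  rw [complexity, Nat.card_coe_set_eq]

/-- Eventually periodic words have bounded complexity. -/
lemma complexity_le_of_evPeriodic (u : ℕ → A) (N P : ℕ) (hP : 0 < P)
    (h : ∀ k, N ≤ k → u (k + P) = u k) (n : ℕ) : complexity u n ≤ N + P := by
  classical
  have key : ∀ i, ∃ i' < N + P, window u i' n = window u i n := by
    intro i
    induction i using Nat.strong_induction_on with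
    | _ i ih =>
      rcases Nat.lt_or_ge i (N + P) with hi | hi
      · exact ⟨i, hi, rfl⟩
      · obtain ⟨i', hi', he⟩ := ih (i - P) (by omega)
        refine ⟨i', hi', he.trans ?_⟩
        apply List.ext_getElem (by simp)
        intro d h1 h2
        simp only [window_length] at h1
        rw [window_get _ _ _ _ h1, window_get _ _ _ _ h1]
        have hh := h (i - P + d) (by omega)
        have he2 : i - P + d + P = i + d := by omega
        rw [he2] at hh
        rw [← hh]
  have hsub : factorsOfLen u n ⊆
      ↑((Finset.range (N + P)).image (fun i => window u i n)) := by
    intro w hw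
    obtain ⟨hl, i, rfl⟩ := mem_factorsOfLen.1 hw
    obtain ⟨i', hi', he⟩ := key i
    simp only [Finset.coe_image, Set.mem_image, Finset.mem_coe, Finset.mem_range]
    exact ⟨i', hi', he⟩
  rw [complexity_eq_ncard]
  calc (factorsOfLen u n).ncard
      ≤ (↑((Finset.range (N + P)).image (fun i => window u i n)) : Set (List A)).ncard :=
        Set.ncard_le_ncard hsub (Finset.finite_toSet _)
    _ = ((Finset.range (N + P)).image (fun i => window u i n)).card := Set.ncard_coe_finset _
    _ ≤ N + P := le_trans (Finset.card_image_le) (by simp)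

end StuProof

namespace StuProof
open List

variable {A : Type*}

lemma isFactor_take {u : ℕ → A} {w : List A} (h : IsFactor u w) (a : ℕ) :
    IsFactor u (w.take a) := by
  obtain ⟨i, hw⟩ := h
  rcases le_or_gt a w.length with ha | ha
  · rw [hw, window_take u i w.length a ha]
    exact isFactor_window u i a
  · rw [List.take_of_length_le (by omega)]
    exact ⟨i, hw⟩

lemma isFactor_drop {u : ℕ → A} {w : List A} (h : IsFactor u w) (a : ℕ) :
    IsFactor u (w.drop a) := by
  obtain ⟨i, hw⟩ := h
  rcases le_or_gt a w.length with ha | ha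
  · rw [hw, window_drop u i w.length a ha]
    exact isFactor_window u (i + a) (w.length - a)
  · rw [List.drop_of_length_le (by omega)]
    exact ⟨0, by simp [window]⟩

lemma isFactor_infix {u : ℕ → A} {w w' : List A} (h : IsFactor u w)
    (hin : w' <:+: w) : IsFactor u w' := by
  obtain ⟨s, t, rfl⟩ := hin
  have h1 : (s ++ (w' ++ t)).drop s.length = w' ++ t := List.drop_left
  have h2 : (w' ++ t).take w'.length = w' := List.take_left
  have := isFactor_take (isFactor_drop (by rwa [List.append_assoc] at h) s.length) w'.length
  rwa [h1, h2] at this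

lemma eq_take_append_getElem {w : List A} {n : ℕ} (h : w.length = n + 1) :
    w = w.take n ++ [w[n]'(by omega)] := by
  apply List.ext_getElem
  · simp; omega
  · intro d h1 h2
    rcases Nat.lt_or_ge d n with hd | hd
    · rw [List.getElem_append_left (by first | (simp; omega) | simp | omega)]
      simp
    · have hdn : d = n := by omega
      subst hdn
      rw [List.getElem_append_right (by first | (simp; omega) | simp | omega)]
      simp [List.length_take, h]

/-- Right special factor. -/
def isRS (u : ℕ → Bool) (w : List Bool) : Prop :=
  IsFactor u (w ++ [false]) ∧ IsFactor u (w ++ [true])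

lemma ext_unique_of_not_isRS {u : ℕ → Bool} {w : List Bool} {b b' : Bool}
    (h : ¬ isRS u w) (h1 : IsFactor u (w ++ [b])) (h2 : IsFactor u (w ++ [b'])) :
    b = b' := by
  by_contra hne
  cases b <;> cases b'
  · exact hne rfl
  · exact h ⟨h1, h2⟩
  · exact h ⟨h2, h1⟩
  · exact hne rfl

section Sturm

variable {u : ℕ → Bool} (hp : ∀ n, complexity u n = n + 1)

include hp

lemma factorsOfLen_finite (n : ℕ) : (factorsOfLen u n).Finite := by
  by_contra hinf
  have h0 : (factorsOfLen u n).ncard = 0 := Set.Infinite.ncard hinf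
  have := hp n
  rw [complexity_eq_ncard, h0] at this
  omega

lemma ncard_factorsOfLen (n : ℕ) : (factorsOfLen u n).ncard = n + 1 := by
  rw [← complexity_eq_ncard]; exact hp n

lemma exists_unique_RS (n : ℕ) :
    ∃! w, w ∈ factorsOfLen u n ∧ isRS u w := by
  classical
  have hfinN : (factorsOfLen u n).Finite := factorsOfLen_finite hp n
  have hfinG : (factorsOfLen u (n+1)).Finite := factorsOfLen_finite hp (n+1)
  set Fn := hfinN.toFinset with hFn
  set G := hfinG.toFinset with hG
  have hcFn : Fn.card = n + 1 := by
    rw [hFn, ← Set.ncard_eq_toFinset_card _ hfinN]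
    exact ncard_factorsOfLen hp n
  have hcG : G.card = n + 2 := by
    rw [hG, ← Set.ncard_eq_toFinset_card _ hfinG]
    exact ncard_factorsOfLen hp (n+1)
  have hmap : ∀ w ∈ G, w.take n ∈ Fn := by
    intro w hw
    rw [hG, Set.Finite.mem_toFinset] at hw
    rw [hFn, Set.Finite.mem_toFinset]
    exact take_mem_factorsOfLen hw
  have hlenFn : ∀ x ∈ Fn, x.length = n := by
    intro x hx
    rw [hFn, Set.Finite.mem_toFinset] at hx
    exact hx.1
  -- fibers
  set fib := fun x => G.filter (fun w => w.take n = x) with hfibdef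
  have hfib_sub : ∀ x ∈ Fn, fib x ⊆ {x ++ [false], x ++ [true]} := by
    intro x hx w hw
    rw [hfibdef, Finset.mem_filter] at hw
    obtain ⟨hwG, hwt⟩ := hw
    have hwlen : w.length = n + 1 := by
      rw [hG, Set.Finite.mem_toFinset] at hwG
      exact hwG.1
    have := eq_take_append_getElem hwlen
    rw [hwt] at this
    rcases Bool.eq_false_or_eq_true (w[n]'(by omega)) with hb | hb
    · rw [hb] at this
      simp [this]
    · rw [hb] at this
      simp [this]
  have hfib_card_le : ∀ x ∈ Fn, (fib x).card ≤ 2 := by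
    intro x hx
    calc (fib x).card ≤ ({x ++ [false], x ++ [true]} : Finset (List Bool)).card :=
          Finset.card_le_card (hfib_sub x hx)
      _ ≤ 2 := Finset.card_insert_le _ _ |>.trans (by simp)
  have hfib_ne : ∀ x ∈ Fn, 1 ≤ (fib x).card := by
    intro x hx
    rw [hFn, Set.Finite.mem_toFinset] at hx
    obtain ⟨b, hb⟩ := exists_ext hx
    have : x ++ [b] ∈ fib x := by
      rw [hfibdef, Finset.mem_filter]
      refine ⟨by rw [hG, Set.Finite.mem_toFinset]; exact hb, ?_⟩
      exact List.take_left' (hx.1)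
    exact Finset.card_pos.2 ⟨_, this⟩
  have hsum : ∑ x ∈ Fn, (fib x).card = n + 2 := by
    rw [← hcG]
    exact (Finset.card_eq_sum_card_fiberwise hmap).symm
  set T := Fn.filter (fun x => 2 ≤ (fib x).card) with hT
  have hTcard : T.card = 1 := by
    have h1 : ∑ x ∈ Fn, (fib x).card ≤ ∑ x ∈ Fn, (if 2 ≤ (fib x).card then 2 else 1) := by
      apply Finset.sum_le_sum
      intro x hx
      split
      · exact hfib_card_le x hx
      · omega
    have h2 : ∑ x ∈ Fn, (if 2 ≤ (fib x).card then 2 else 1) ≤ ∑ x ∈ Fn, (fib x).card := by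
      apply Finset.sum_le_sum
      intro x hx
      split
      · assumption
      · exact hfib_ne x hx
    have h3 : ∑ x ∈ Fn, (if 2 ≤ (fib x).card then 2 else 1)
        = Fn.card + T.card := by
      have : ∀ x ∈ Fn, (if 2 ≤ (fib x).card then 2 else 1)
          = 1 + (if 2 ≤ (fib x).card then 1 else 0) := by
        intro x _; split <;> rfl
      rw [Finset.sum_congr rfl this, Finset.sum_add_distrib, Finset.sum_const, smul_eq_mul,
        mul_one, hT, Finset.card_filter]
    omega
  obtain ⟨x₀, hx₀⟩ := Finset.card_eq_one.1 hTcard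
  have hmem_iff : ∀ x, (x ∈ factorsOfLen u n ∧ isRS u x) ↔ x ∈ T := by
    intro x
    constructor
    · rintro ⟨hxF, hrs⟩
      have hxFn : x ∈ Fn := by rw [hFn, Set.Finite.mem_toFinset]; exact hxF
      rw [hT, Finset.mem_filter]
      refine ⟨hxFn, ?_⟩
      have hsub : ({x ++ [false], x ++ [true]} : Finset (List Bool)) ⊆ fib x := by
        intro w hw
        simp only [Finset.mem_insert, Finset.mem_singleton] at hw
        rw [hfibdef, Finset.mem_filter]
        rcases hw with rfl | rfl
        · refine ⟨?_, List.take_left' hxF.1⟩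
          rw [hG, Set.Finite.mem_toFinset]
          exact ⟨by simp [hxF.1], hrs.1⟩
        · refine ⟨?_, List.take_left' hxF.1⟩
          rw [hG, Set.Finite.mem_toFinset]
          exact ⟨by simp [hxF.1], hrs.2⟩
      calc 2 = ({x ++ [false], x ++ [true]} : Finset (List Bool)).card := by
              rw [Finset.card_insert_of_notMem (by simp), Finset.card_singleton]
        _ ≤ (fib x).card := Finset.card_le_card hsub
    · intro hxT
      rw [hT, Finset.mem_filter] at hxT
      obtain ⟨hxFn, hc⟩ := hxT
      have heq : fib x = {x ++ [false], x ++ [true]} := by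
        apply Finset.eq_of_subset_of_card_le (hfib_sub x hxFn)
        calc ({x ++ [false], x ++ [true]} : Finset (List Bool)).card ≤ 2 :=
              Finset.card_insert_le _ _ |>.trans (by simp)
          _ ≤ (fib x).card := hc
      have hf : x ++ [false] ∈ fib x := by rw [heq]; simp
      have ht : x ++ [true] ∈ fib x := by rw [heq]; simp
      rw [hfibdef, Finset.mem_filter, hG, Set.Finite.mem_toFinset] at hf ht
      refine ⟨by rw [hFn, Set.Finite.mem_toFinset] at hxFn; exact hxFn, hf.1.2, ht.1.2⟩
  refine ⟨x₀, (hmem_iff x₀).2 (by rw [hx₀]; simp), ?_⟩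
  intro y hy
  have := (hmem_iff y).1 hy
  rw [hx₀, Finset.mem_singleton] at this
  exact this

/-- Uniqueness form. -/
lemma isRS_eq {w w' : List Bool} {n : ℕ}
    (hw : w ∈ factorsOfLen u n) (hw' : w' ∈ factorsOfLen u n)
    (h1 : isRS u w) (h2 : isRS u w') : w = w' := by
  obtain ⟨x, -, hx⟩ := exists_unique_RS hp n
  rw [hx w ⟨hw, h1⟩, hx w' ⟨hw', h2⟩]

end Sturm
end StuProof

namespace StuProof
open List

variable {A : Type*}

lemma factorsOfLen_finite_of_le {u : ℕ → A} {m n : ℕ} (hmn : m ≤ n)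
    (hf : (factorsOfLen u n).Finite) : (factorsOfLen u m).Finite := by
  have key : ∀ i, (factorsOfLen u (n - i)).Finite := by
    intro i
    induction i with
    | zero => simpa
    | succ i ih =>
      rcases Nat.eq_zero_or_pos (n - i) with h0 | h0
      · have he : n - (i+1) = n - i := by omega
        rwa [he]
      · have he : n - i = (n - (i+1)) + 1 := by omega
        rw [he] at ih
        exact factorsOfLen_finite_of u _ ih
  have := key (n - m)
  rwa [Nat.sub_sub_self hmn] at this

lemma windows_eq_imp_letter {u : ℕ → A} {p p' k : ℕ} (hk : 0 < k)
    (h : window u p k = window u p' k) : u p = u p' := by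
  have h0 : (window u p k)[0]'(by simpa using hk) = (window u p' k)[0]'(by simpa using hk) := by
    congr 1
  rw [window_get u p k 0 hk, window_get u p' k 0 hk] at h0
  simpa using h0

/-- If complexity stalls at level `k`, extensions are unique. -/
lemma ext_unique_of_card_eq {v : ℕ → Bool} {k : ℕ}
    (hfin : (factorsOfLen v (k+1)).Finite)
    (hcard : (factorsOfLen v (k+1)).ncard ≤ (factorsOfLen v k).ncard)
    {w : List Bool} {b b' : Bool}
    (h1 : w ++ [b] ∈ factorsOfLen v (k+1)) (h2 : w ++ [b'] ∈ factorsOfLen v (k+1)) :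
    b = b' := by
  classical
  by_contra hne
  have hfink : (factorsOfLen v k).Finite := factorsOfLen_finite_of v k hfin
  have hwlen : w.length = k := by
    have := h1.1
    simp at this
    omega
  set G := hfin.toFinset with hGdef
  set Fk := hfink.toFinset with hFkdef
  have hsub : Fk ⊆ (G.erase (w ++ [b'])).image (fun x => x.take k) := by
    intro y hy
    rw [hFkdef, Set.Finite.mem_toFinset] at hy
    rw [Finset.mem_image]
    by_cases hyw : y = w
    · refine ⟨w ++ [b], ?_, ?_⟩
      · rw [Finset.mem_erase]
        refine ⟨?_, by rw [hGdef, Set.Finite.mem_toFinset]; exact h1⟩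
        intro he
        exact hne (by simpa using he)
      · rw [List.take_left' hwlen, hyw]
    · obtain ⟨c, hc⟩ := exists_ext hy
      refine ⟨y ++ [c], ?_, ?_⟩
      · rw [Finset.mem_erase]
        refine ⟨?_, by rw [hGdef, Set.Finite.mem_toFinset]; exact hc⟩
        intro he
        apply hyw
        have : (y ++ [c]).take k = (w ++ [b']).take k := by rw [he]
        rwa [List.take_left' hy.1, List.take_left' hwlen] at this
      · exact List.take_left' hy.1
  have hGcard : G.card = (factorsOfLen v (k+1)).ncard := by
    rw [hGdef, ← Set.ncard_eq_toFinset_card _ hfin]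
  have hFkcard : Fk.card = (factorsOfLen v k).ncard := by
    rw [hFkdef, ← Set.ncard_eq_toFinset_card _ hfink]
  have hmem : w ++ [b'] ∈ G := by rw [hGdef, Set.Finite.mem_toFinset]; exact h2
  have h5 : Fk.card ≤ G.card - 1 := by
    calc Fk.card ≤ ((G.erase (w ++ [b'])).image (fun x => x.take k)).card :=
          Finset.card_le_card hsub
      _ ≤ (G.erase (w ++ [b'])).card := Finset.card_image_le
      _ = G.card - 1 := Finset.card_erase_of_mem hmem
  have hpos : 0 < G.card := Finset.card_pos.2 ⟨_, hmem⟩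
  omega

section Recur
variable {u : ℕ → Bool} (hp : ∀ n, complexity u n = n + 1)
include hp

lemma not_evPeriodic (N P : ℕ) (hP : 0 < P) :
    ∃ k, N ≤ k ∧ u (k + P) ≠ u k := by
  by_contra hno
  push_neg at hno
  have := complexity_le_of_evPeriodic u N P hP (fun k hk => hno k hk) (N + P)
  rw [hp (N+P)] at this
  omega

/-- Every factor occurs at arbitrarily large positions. -/
lemma recur (w : List Bool) (hw : IsFactor u w) (N : ℕ) :
    ∃ i, N ≤ i ∧ window u i w.length = w := by
  rcases Nat.eq_zero_or_pos w.length with hlen0 | hlen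
  · rw [List.length_eq_zero_iff] at hlen0
    exact ⟨N, le_rfl, by rw [hlen0]; simp [window]⟩
  by_contra hno
  push_neg at hno
  obtain ⟨i₀, hi₀⟩ := hw
  set v : ℕ → Bool := fun k => u (N + k) with hv
  have hwin : ∀ j k, window v j k = window u (N + j) k := by
    intro j k
    apply List.ext_getElem (by simp)
    intro d h1 h2
    simp only [window_length] at h1
    rw [window_get _ _ _ _ h1, window_get _ _ _ _ h1]
    show u (N + (j + d)) = u (N + j + d)
    congr 1
    omega
  set K := w.length with hK
  have hnotf : ∀ k, K ≤ k → window u i₀ k ∉ factorsOfLen v k := by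
    intro k hk hmem
    obtain ⟨-, j, hj⟩ := mem_factorsOfLen.1 hmem
    rw [hwin] at hj
    have htake := congrArg (fun s => List.take K s) hj
    rw [window_take u i₀ k _ hk, window_take u (N+j) k _ hk] at htake
    exact hno (N + j) (by omega) (htake.symm.trans hi₀.symm)
  have hsubk : ∀ k, K ≤ k → factorsOfLen v k ⊆ factorsOfLen u k \ {window u i₀ k} := by
    intro k hk y hy
    obtain ⟨hyl, j, hj⟩ := mem_factorsOfLen.1 hy
    rw [hwin] at hj
    constructor
    · exact mem_factorsOfLen.2 ⟨hyl, N + j, hj⟩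
    · intro hyeq
      simp only [Set.mem_singleton_iff] at hyeq
      exact hnotf k hk (hyeq ▸ hy)
  have hufin : ∀ k, (factorsOfLen u k).Finite := factorsOfLen_finite hp
  have hvfin : ∀ k, (factorsOfLen v k).Finite := by
    intro k
    rcases le_or_gt K k with hk | hk
    · exact Set.Finite.subset (hufin k).diff (hsubk k hk)
    · exact factorsOfLen_finite_of_le (le_of_lt hk)
        (Set.Finite.subset (hufin K).diff (hsubk K le_rfl))
  have hcK : (factorsOfLen v K).ncard ≤ K := by
    calc (factorsOfLen v K).ncard
        ≤ (factorsOfLen u K \ {window u i₀ K}).ncard :=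
          Set.ncard_le_ncard (hsubk K le_rfl) (hufin K).diff
      _ = (factorsOfLen u K).ncard - 1 := by
          rw [Set.ncard_diff_singleton_of_mem (window_mem_factorsOfLen u i₀ K)]
      _ ≤ K := by rw [ncard_factorsOfLen hp K]; omega
  -- find a stall level
  have hstall : ∃ k, k < K ∧ (factorsOfLen v (k+1)).ncard ≤ (factorsOfLen v k).ncard := by
    by_contra hc
    push_neg at hc
    have hgrow : ∀ j, j ≤ K → j + 1 ≤ (factorsOfLen v j).ncard := by
      intro j
      induction j with
      | zero =>
        intro _
        rw [factorsOfLen_zero, Set.ncard_singleton]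
      | succ j ih =>
        intro hj
        have h1 := hc j (by omega)
        have h2 := ih (by omega)
        omega
    have := hgrow K le_rfl
    omega
  obtain ⟨k, hkK, hkstall⟩ := hstall
  -- determinism at level k
  have det : ∀ j j', window v j k = window v j' k → v (j + k) = v (j' + k) := by
    intro j j' heq
    have h1 : window v j k ++ [v (j + k)] ∈ factorsOfLen v (k+1) := by
      rw [← window_succ]; exact window_mem_factorsOfLen v j (k+1)
    have h2 : window v j' k ++ [v (j' + k)] ∈ factorsOfLen v (k+1) := by
      rw [← window_succ]; exact window_mem_factorsOfLen v j' (k+1)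
    rw [← heq] at h2
    exact ext_unique_of_card_eq (hvfin (k+1)) hkstall h1 h2
  have hprop : ∀ j j', window v j k = window v j' k →
      ∀ d, window v (j + d) k = window v (j' + d) k := by
    intro j j' heq d
    induction d with
    | zero => simpa using heq
    | succ d ih =>
      have hl := det _ _ ih
      have e1 : window v (j + d) (k+1) = window v (j' + d) (k+1) := by
        rw [window_succ, window_succ, ih, hl]
      rw [window_cons, window_cons] at e1
      have h2 := (List.cons_eq_cons.mp e1).2
      have ha : j + d + 1 = j + (d + 1) := by omega
      have hb : j' + d + 1 = j' + (d + 1) := by omega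
      rwa [ha, hb] at h2
  -- pigeonhole
  have hpig : ∃ j1 ∈ Finset.range (K + 1), ∃ j2 ∈ Finset.range (K + 1),
      j1 ≠ j2 ∧ window v j1 k = window v j2 k := by
    apply Finset.exists_ne_map_eq_of_card_lt_of_maps_to
    · rw [Finset.card_range]
      have hmono : (factorsOfLen v k).ncard ≤ K := by
        rcases Nat.lt_or_ge k K with h | h
        · -- monotone up to K
          have step : ∀ j, (factorsOfLen v j).ncard ≤ (factorsOfLen v (j+1)).ncard :=
            fun j => ncard_factorsOfLen_mono v j (hvfin (j+1))
          have chain : ∀ a b, a ≤ b → (factorsOfLen v a).ncard ≤ (factorsOfLen v b).ncard := by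
            intro a b hab
            obtain ⟨c, rfl⟩ : ∃ c, b = a + c := ⟨b - a, by omega⟩
            clear hab
            induction c with
            | zero => exact le_rfl
            | succ c ih => exact le_trans ih (step (a + c))
          exact le_trans (chain k K (by omega)) hcK
        · omega
      calc ((hvfin k).toFinset).card = (factorsOfLen v k).ncard :=
            (Set.ncard_eq_toFinset_card _ (hvfin k)).symm
        _ ≤ K := hmono
        _ < K + 1 := by omega
    · intro j _
      rw [Finset.mem_coe, Set.Finite.mem_toFinset]
      exact window_mem_factorsOfLen v j k
  obtain ⟨j1, -, j2, -, hne, heqw⟩ := hpig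
  -- wlog j1 < j2
  rcases Nat.lt_or_ge j1 j2 with hlt | hge
  case _ =>
    have hP : 0 < j2 - j1 := by omega
    have hper : ∀ x, N + j1 ≤ x → u (x + (j2 - j1)) = u x := by
      intro x hx
      have hd := hprop j1 j2 heqw (x - (N + j1))
      have hlet : v (j1 + (x - (N + j1))) = v (j2 + (x - (N + j1))) := by
        rcases Nat.eq_zero_or_pos k with hk0 | hk0
        · have := det j1 j2 heqw
          -- k = 0 : windows trivial, but det gives letters at +k... need general positions
          have hall : ∀ p p', v p = v p' := by
            intro p p'
            have : window v p k = window v p' k := by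
              rw [hk0]; simp [window]
            have := det p p' this
            rwa [hk0, Nat.add_zero, Nat.add_zero] at this
          exact hall _ _
        · exact windows_eq_imp_letter hk0 hd
      have e1 : N + (j1 + (x - (N + j1))) = x := by omega
      have e2 : N + (j2 + (x - (N + j1))) = x + (j2 - j1) := by omega
      rw [hv] at hlet
      simp only at hlet
      rw [e1, e2] at hlet
      exact hlet.symm
    obtain ⟨y, hy1, hy2⟩ := not_evPeriodic hp (N + j1) (j2 - j1) hP
    exact hy2 (hper y hy1)
  case _ =>
    have hlt : j2 < j1 := by omega
    have hP : 0 < j1 - j2 := by omega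
    have hper : ∀ x, N + j2 ≤ x → u (x + (j1 - j2)) = u x := by
      intro x hx
      have hd := hprop j2 j1 heqw.symm (x - (N + j2))
      have hlet : v (j2 + (x - (N + j2))) = v (j1 + (x - (N + j2))) := by
        rcases Nat.eq_zero_or_pos k with hk0 | hk0
        · have hall : ∀ p p', v p = v p' := by
            intro p p'
            have : window v p k = window v p' k := by
              rw [hk0]; simp [window]
            have := det p p' this
            rwa [hk0, Nat.add_zero, Nat.add_zero] at this
          exact hall _ _
        · exact windows_eq_imp_letter hk0 hd
      have e1 : N + (j2 + (x - (N + j2))) = x := by omega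
      have e2 : N + (j1 + (x - (N + j2))) = x + (j1 - j2) := by omega
      rw [hv] at hlet
      simp only at hlet
      rw [e1, e2] at hlet
      exact hlet.symm
    obtain ⟨y, hy1, hy2⟩ := not_evPeriodic hp (N + j2) (j1 - j2) hP
    exact hy2 (hper y hy1)

end Recur
end StuProof

namespace StuProof
open List

lemma bool_ne_iff {a b : Bool} (h : ¬ a = b) : a = !b := by
  cases a <;> cases b <;> simp_all

section Core
variable {u : ℕ → Bool} (hp : ∀ n, complexity u n = n + 1)
include hp

lemma core_contradiction (x : Bool) (t : List Bool)
    (h1 : IsFactor u (x :: (t ++ [x])))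
    (h2 : IsFactor u ((!x) :: (t ++ [!x])))
    (hRS : isRS u (x :: t)) : False := by
  classical
  set m := t.length with hm
  set V : ℕ → List Bool := fun j => window u j (m+1) with hV
  set B : List Bool := x :: t with hB
  set Z : List Bool := (!x) :: t with hZ
  set T0 : List Bool := t ++ [!x] with hT0
  set T1 : List Bool := t ++ [x] with hT1
  set c : ℕ := t.count x with hc
  have hxne : x ≠ !x := by cases x <;> simp
  have hcnt_x : List.count x [x] = 1 := by simp
  have hcnt_nx : List.count x [!x] = 0 := by cases x <;> simp
  have hcntB : B.count x = c + 1 := by rw [hB, hc]; simp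
  have hcntT0 : T0.count x = c := by rw [hT0, hc, List.count_append]; omega
  have hBlen : B.length = m + 1 := by rw [hB]; simp [hm]
  have hZlen : Z.length = m + 1 := by rw [hZ]; simp [hm]
  have hT0len : T0.length = m + 1 := by rw [hT0]; simp [hm]
  have hT1len : T1.length = m + 1 := by rw [hT1]; simp [hm]
  have hFB : IsFactor u B := isFactor_infix h1 ⟨[], [x], by simp [hB, hT1]⟩
  have hFT1 : IsFactor u T1 := isFactor_infix h1 ⟨[x], [], by simp [hT1]⟩
  have hFZ : IsFactor u Z := isFactor_infix h2 ⟨[], [!x], by simp [hZ, hT0]⟩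
  have hFT0 : IsFactor u T0 := isFactor_infix h2 ⟨[!x], [], by simp [hT0]⟩
  have hFZx : IsFactor u (Z ++ [!x]) := by
    have hZx : Z ++ [!x] = (!x) :: (t ++ [!x]) := by rw [hZ]; simp
    rwa [hZx]
  have hT0neB : T0 ≠ B := by
    intro he
    have := congrArg (List.count x) he
    rw [hcntT0, hcntB] at this
    omega
  have hZneB : Z ≠ B := by
    rw [hZ, hB]
    intro he
    exact hxne ((List.cons_eq_cons.mp he).1).symm
  have hRSonly : ∀ W, IsFactor u W → W.length = m + 1 → isRS u W → W = B := by
    intro W hF hL hW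
    exact isRS_eq hp
      (mem_factorsOfLen.2 ⟨hL, by obtain ⟨ii, hii⟩ := hF; exact ⟨ii, by rwa [hL] at hii⟩⟩)
      (mem_factorsOfLen.2 ⟨hBlen, by obtain ⟨ii, hii⟩ := hFB; exact ⟨ii, by rwa [hBlen] at hii⟩⟩)
      hW hRS
  have hVfac : ∀ j, IsFactor u (V j) := fun j => isFactor_window u j (m+1)
  have hVlen : ∀ j, (V j).length = m + 1 := fun j => window_length u j (m+1)
  have hrec : ∀ (W : List Bool), IsFactor u W → W.length = m + 1 →
      ∀ N, ∃ i, N ≤ i ∧ V i = W := by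
    intro W hF hL N
    obtain ⟨i, hi1, hi2⟩ := recur hp W hF N
    exact ⟨i, hi1, by rw [hL] at hi2; exact hi2⟩
  have hshift : ∀ j (cc : Bool) (w : List Bool), V j = cc :: w →
      V (j+1) = w ++ [u (j + (m+1))] := by
    intro j cc w hcw
    have e1 := window_cons u j (m+1)
    have e2 := window_succ u j (m+1)
    rw [show window u j (m+1) = V j from rfl, hcw] at e2
    have e3 := e1.symm.trans e2
    simp only [List.cons_append] at e3
    exact (List.cons_eq_cons.mp e3).2
  have hfirst : ∀ j (cc : Bool) (w : List Bool), V j = cc :: w → u j = cc := by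
    intro j cc w hcw
    have e1 := window_cons u j m
    rw [show window u j (m+1) = V j from rfl, hcw] at e1
    exact ((List.cons_eq_cons.mp e1).1).symm
  have hVcons : ∀ j, ∃ cc w, V j = cc :: w := by
    intro j
    have hl := hVlen j
    cases hq : V j with
    | nil => rw [hq] at hl; simp at hl
    | cons a l => exact ⟨a, l, rfl⟩
  have hstep : ∀ j j', V j = V j' → V j ≠ B → V (j+1) = V (j'+1) := by
    intro j j' heq hne
    have hf1 : IsFactor u (V j ++ [u (j + (m+1))]) := by
      rw [← window_succ]
      exact isFactor_window u j (m+2)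
    have hf2 : IsFactor u (V j ++ [u (j' + (m+1))]) := by
      rw [heq, ← window_succ]
      exact isFactor_window u j' (m+2)
    have hnotRS : ¬ isRS u (V j) := by
      intro hrs
      exact hne (hRSonly _ (hVfac j) (hVlen j) hrs)
    have hlet : u (j + (m+1)) = u (j' + (m+1)) := ext_unique_of_not_isRS hnotRS hf1 hf2
    obtain ⟨cc, w, hcw⟩ := hVcons j
    have hcw' : V j' = cc :: w := by rw [← heq]; exact hcw
    rw [hshift j cc w hcw, hshift j' cc w hcw', hlet]
  have hsync : ∀ d j j', V j = V j' → (∀ d', d' < d → V (j + d') ≠ B) →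
      V (j + d) = V (j' + d) := by
    intro d
    induction d with
    | zero => intro j j' heq _; simpa using heq
    | succ d ih =>
      intro j j' heq hnb
      have hd := ih j j' heq (fun d' hd' => hnb d' (by omega))
      have hst := hstep (j + d) (j' + d) hd (hnb d (by omega))
      have ha : j + d + 1 = j + (d+1) := by omega
      have hb : j' + d + 1 = j' + (d+1) := by omega
      rwa [ha, hb] at hst
  have hZdet : ∀ j, V j = Z → V (j+1) = T0 ∧ u j = !x := by
    intro j hj
    have hZnotRS : ¬ isRS u Z := fun hrs => hZneB (hRSonly Z hFZ hZlen hrs)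
    have hf1 : IsFactor u (Z ++ [u (j + (m+1))]) := by
      rw [← hj, ← window_succ]
      exact isFactor_window u j (m+2)
    have hlet : u (j + (m+1)) = !x := ext_unique_of_not_isRS hZnotRS hf1 hFZx
    have hsh := hshift j (!x) t (by rw [hj, hZ])
    exact ⟨by rw [hsh, hlet, hT0], hfirst j (!x) t (by rw [hj, hZ])⟩
  obtain ⟨jT0, hjT0⟩ : ∃ j, V j = T0 := by
    obtain ⟨i, -, hi⟩ := hrec T0 hFT0 hT0len 0
    exact ⟨i, hi⟩
  have hex : ∃ a, 0 < a ∧ V (jT0 + a) = B := by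
    obtain ⟨i, hi1, hi2⟩ := hrec B hFB hBlen (jT0 + 1)
    exact ⟨i - jT0, by omega, by rw [show jT0 + (i - jT0) = i by omega]; exact hi2⟩
  set A := Nat.find hex with hA
  have hAspec : 0 < A ∧ V (jT0 + A) = B := Nat.find_spec hex
  have hAmin : ∀ a, a < A → V (jT0 + a) ≠ B := by
    intro a ha hVa
    rcases Nat.eq_zero_or_pos a with rfl | hapos
    · rw [Nat.add_zero] at hVa
      exact hT0neB (hjT0 ▸ hVa)
    · exact Nat.find_min hex ha ⟨hapos, hVa⟩
  set q := A - 1 with hq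
  have hqA : A = q + 1 := by omega
  have hT0traj : ∀ j, V j = T0 →
      (∀ d, d ≤ q → V (j + d) = V (jT0 + d) ∧ V (j + d) ≠ B) ∧ V (j + (q+1)) = B := by
    intro j hj
    have hsy : ∀ d, d ≤ q + 1 → V (jT0 + d) = V (j + d) := by
      intro d hd
      exact hsync d jT0 j (by rw [hjT0, hj]) (fun d' hd' => hAmin d' (by omega))
    refine ⟨fun d hd => ⟨(hsy d (by omega)).symm, ?_⟩, ?_⟩
    · rw [← hsy d (by omega)]
      exact hAmin d (by omega)
    · rw [← hsy (q+1) le_rfl, ← hqA]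
      exact hAspec.2
  have hT0letters : ∀ j, V j = T0 → window u j (q+1) = window u jT0 (q+1) := by
    intro j hj
    apply List.ext_getElem (by simp)
    intro d hd1 hd2
    simp only [window_length] at hd1
    rw [window_get _ _ _ _ hd1, window_get _ _ _ _ hd1]
    exact windows_eq_imp_letter (by omega : 0 < m + 1)
      ((hT0traj j hj).1 d (by omega)).1
  set s := (window u jT0 (q+1)).count x with hs
  obtain ⟨iB0, -, hiB0⟩ := hrec B hFB hBlen 0
  obtain ⟨jZ, hjZ1, hjZ2⟩ := hrec Z hFZ hZlen iB0
  set i : ℕ := Nat.findGreatest (fun a => V a = B) jZ with hidef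
  have hiB : V i = B := Nat.findGreatest_spec (P := fun a => V a = B) hjZ1 hiB0
  have hile : i ≤ jZ := Nat.findGreatest_le jZ
  have hmax : ∀ a, i < a → a ≤ jZ → V a ≠ B := by
    intro a ha1 ha2
    exact Nat.findGreatest_is_greatest (by rw [← hidef]; omega) ha2
  have hine : i ≠ jZ := by
    intro he
    rw [he, hjZ2] at hiB
    exact hZneB hiB
  have hilt : i < jZ := by omega
  have hZT0 : V (jZ + 1) = T0 := (hZdet jZ hjZ2).1
  have hfZ : u jZ = !x := (hZdet jZ hjZ2).2
  have htrajZ := hT0traj (jZ + 1) hZT0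
  set istar := jZ + q + 2 with histar
  have hBistar : V istar = B := by
    rw [histar, show jZ + q + 2 = jZ + 1 + (q + 1) by omega]
    exact htrajZ.2
  have hnoB : ∀ a, i < a → a < istar → V a ≠ B := by
    intro a ha1 ha2
    rcases le_or_gt a jZ with hle | hgt
    · exact hmax a ha1 hle
    · have ha : a = jZ + 1 + (a - jZ - 1) := by omega
      rw [ha]
      exact (htrajZ.1 (a - jZ - 1) (by omega)).2
  have hbranch : V (i + 1) = t ++ [u (i + (m+1))] := hshift i x t (by rw [hiB, hB])
  have hbx : u (i + (m+1)) = x := by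
    by_contra hbxne
    have hbnx : u (i + (m+1)) = !x := bool_ne_iff hbxne
    have hiT0 : V (i + 1) = T0 := by rw [hbranch, hbnx, hT0]
    have htraj := hT0traj (i+1) hiT0
    have hBnext : V (i + 1 + (q+1)) = B := htraj.2
    have hjZle : jZ ≤ i + q + 1 := by
      by_contra hcon
      exact hmax (i + 1 + (q+1)) (by omega) (by omega) hBnext
    set d := jZ - i - 1 with hd
    have hdq : d ≤ q := by omega
    have hZtraj : V (jT0 + d) = Z := by
      have hh := (htraj.1 d hdq).1
      rw [show i + 1 + d = jZ by omega, hjZ2] at hh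
      exact hh.symm
    have hnext : V (jT0 + d + 1) = T0 := (hZdet _ hZtraj).1
    rcases Nat.lt_or_ge d q with hdlt | hdge
    · have htraj2 := hT0traj (jT0 + d + 1) hnext
      have hnb := (htraj2.1 (q - d) (by omega)).2
      rw [show jT0 + d + 1 + (q - d) = jT0 + (q + 1) by omega, ← hqA] at hnb
      exact hnb hAspec.2
    · have hdq' : d = q := by omega
      rw [hdq', show jT0 + q + 1 = jT0 + (q+1) by omega, ← hqA, hAspec.2] at hnext
      exact hT0neB hnext.symm
  have hiT1 : V (i + 1) = T1 := by rw [hbranch, hbx, hT1]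
  set e := jZ - i with he
  have he1 : 1 ≤ e := by omega
  set r := e + q + 1 with hr
  have histar2 : istar = i + 1 + r := by omega
  have hfin := factorsOfLen_finite hp (m+1)
  have hcard : hfin.toFinset.card = m + 2 := by
    rw [← Set.ncard_eq_toFinset_card _ hfin]
    exact ncard_factorsOfLen hp (m+1)
  set S : Finset (List Bool) :=
    insert B ((Finset.range r).image (fun d => V (i + 1 + d))) with hS
  have hSsub : S ⊆ hfin.toFinset := by
    intro w hw
    rw [Set.Finite.mem_toFinset]
    rw [hS, Finset.mem_insert] at hw
    rcases hw with rfl | hw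
    · exact mem_factorsOfLen.2 ⟨hBlen, by
        obtain ⟨ii, hii⟩ := hFB
        exact ⟨ii, by rwa [hBlen] at hii⟩⟩
    · rw [Finset.mem_image] at hw
      obtain ⟨d, -, rfl⟩ := hw
      exact mem_factorsOfLen.2 ⟨hVlen _, i + 1 + d, rfl⟩
  have hcover : hfin.toFinset ⊆ S := by
    intro w hw
    rw [Set.Finite.mem_toFinset] at hw
    obtain ⟨hwlen, hwfac⟩ := hw
    obtain ⟨x₀, hx₀1, hx₀2⟩ := hrec w hwfac hwlen i
    set i₁ := Nat.findGreatest (fun a => V a = B) x₀ with hi₁def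
    have hi₁B : V i₁ = B := Nat.findGreatest_spec (P := fun a => V a = B) hx₀1 hiB
    have hi₁le : i₁ ≤ x₀ := Nat.findGreatest_le x₀
    have hi₁max : ∀ a, i₁ < a → a ≤ x₀ → V a ≠ B := by
      intro a ha1 ha2
      exact Nat.findGreatest_is_greatest (by rw [← hi₁def]; omega) ha2
    rcases Nat.eq_or_lt_of_le hi₁le with heq | hlt
    · rw [hS, Finset.mem_insert]
      left
      rw [← hx₀2, ← heq, hi₁B]
    · set d := x₀ - i₁ - 1 with hd
      have hbr : V (i₁ + 1) = t ++ [u (i₁ + (m+1))] := hshift i₁ x t (by rw [hi₁B, hB])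
      by_cases hb1 : u (i₁ + (m+1)) = x
      · have hV1 : V (i₁ + 1) = T1 := by rw [hbr, hb1, hT1]
        have hsy : ∀ dd, dd ≤ r → V (i + 1 + dd) = V (i₁ + 1 + dd) := by
          intro dd hdd
          exact hsync dd (i+1) (i₁+1) (by rw [hiT1, hV1])
            (fun d' hd' => hnoB (i+1+d') (by omega) (by omega))
        have hBnext : V (i₁ + 1 + r) = B := by
          rw [← hsy r le_rfl, ← histar2]
          exact hBistar
        have hx₀lt : x₀ < i₁ + 1 + r := by
          by_contra hcon
          exact hi₁max (i₁ + 1 + r) (by omega) (by omega) hBnext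
        rw [hS, Finset.mem_insert]
        right
        rw [Finset.mem_image]
        refine ⟨d, Finset.mem_range.2 (by omega), ?_⟩
        rw [hsy d (by omega), show i₁ + 1 + d = x₀ by omega, hx₀2]
      · have hbnx : u (i₁ + (m+1)) = !x := bool_ne_iff hb1
        have hV1 : V (i₁ + 1) = T0 := by rw [hbr, hbnx, hT0]
        have htr := hT0traj (i₁ + 1) hV1
        have hBnext : V (i₁ + 1 + (q+1)) = B := htr.2
        have hx₀lt : x₀ < i₁ + 1 + (q + 1) := by
          by_contra hcon
          exact hi₁max (i₁ + 1 + (q+1)) (by omega) (by omega) hBnext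
        have hdq : d ≤ q := by omega
        have e1 : V (i₁ + 1 + d) = V (jT0 + d) := (htr.1 d hdq).1
        have e2 : V (jZ + 1 + d) = V (jT0 + d) := (htrajZ.1 d hdq).1
        rw [hS, Finset.mem_insert]
        right
        rw [Finset.mem_image]
        refine ⟨e + d, Finset.mem_range.2 (by omega), ?_⟩
        rw [show i + 1 + (e + d) = jZ + 1 + d by omega, e2, ← e1,
          show i₁ + 1 + d = x₀ by omega, hx₀2]
  have hSeq : S = hfin.toFinset := Finset.Subset.antisymm hSsub hcover
  have hinj : ∀ d1, d1 < r → ∀ d2, d2 < r →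
      V (i + 1 + d1) = V (i + 1 + d2) → d1 = d2 := by
    intro d1 hd1 d2 hd2 heq
    by_contra hne
    rcases Nat.lt_or_ge d1 d2 with hlt | hge
    · have hst := hsync (r - d2) (i + 1 + d2) (i + 1 + d1) heq.symm
        (fun d' hd' => hnoB (i+1+d2+d') (by omega) (by omega))
      rw [show i + 1 + d2 + (r - d2) = istar by omega, hBistar] at hst
      exact hnoB (i + 1 + d1 + (r - d2)) (by omega) (by omega) hst.symm
    · have hlt2 : d2 < d1 := by omega
      have hst := hsync (r - d1) (i + 1 + d1) (i + 1 + d2) heq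
        (fun d' hd' => hnoB (i+1+d1+d') (by omega) (by omega))
      rw [show i + 1 + d1 + (r - d1) = istar by omega, hBistar] at hst
      exact hnoB (i + 1 + d2 + (r - d1)) (by omega) (by omega) hst.symm
  have hBnotmem : B ∉ (Finset.range r).image (fun d => V (i + 1 + d)) := by
    rw [Finset.mem_image]
    rintro ⟨d, hd, hdd⟩
    rw [Finset.mem_range] at hd
    exact hnoB (i + 1 + d) (by omega) (by omega) hdd
  have himg : ((Finset.range r).image (fun d => V (i + 1 + d))).card = r := by
    rw [Finset.card_image_of_injOn, Finset.card_range]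
    intro a ha b hb hab
    exact hinj a (Finset.mem_range.mp (Finset.mem_coe.mp ha))
      b (Finset.mem_range.mp (Finset.mem_coe.mp hb)) hab
  have hScard : S.card = r + 1 := by
    rw [hS, Finset.card_insert_of_notMem hBnotmem, himg]
  have hrm : r = m + 1 := by
    have hh := hScard
    rw [hSeq, hcard] at hh
    omega
  have heq_e : e = m - q := by omega
  have hqm : q < m := by omega
  have hwinB : ∀ jj, V jj = B → window u jj e = B.take e := by
    intro jj hjj
    rw [← hjj]
    exact (window_take u jj (m+1) e (by omega)).symm
  set hh := (B.take e).count x with hhdef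
  have hEQ2 : c = s + hh := by
    have hw : window u (jZ + 1) (m+1) = T0 := hZT0
    have hdec : window u (jZ+1) (m+1)
        = window u (jZ+1) (q+1) ++ window u (jZ + 1 + (q+1)) (m - q) := by
      rw [← window_append]
      congr 1
      omega
    have hc1 : (window u (jZ+1) (q+1)).count x = s := by
      rw [hT0letters (jZ+1) hZT0]
    have hc2 : (window u (jZ + 1 + (q+1)) (m - q)).count x = hh := by
      have hie : jZ + 1 + (q+1) = istar := by omega
      rw [hie, show m - q = e from heq_e.symm, hwinB istar hBistar]
    have hcw := congrArg (List.count x) hw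
    rw [hdec, List.count_append, hc1, hc2, hcntT0] at hcw
    omega
  have hEQ1 : c + 2 = hh + s := by
    have hbig : window u i (m+2) = B ++ [x] := by
      rw [window_succ, hbx, show window u i (m+1) = B from hiB]
    have hdec : window u i (m+2) = window u i e ++ window u (i + e) (q+2) := by
      rw [← window_append]
      congr 1
      omega
    have hc1 : (window u i e).count x = hh := by rw [hwinB i hiB]
    have hc2 : (window u (i+e) (q+2)).count x = s := by
      have hie : i + e = jZ := by omega
      rw [hie, window_cons, List.count_cons, hT0letters (jZ+1) hZT0, hfZ]
      have hxx : ((!x) = x) = False := by cases x <;> simp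
      simp [hxx, hs]
    have hcw := congrArg (List.count x) hbig
    rw [hdec, List.count_append, hc1, hc2, List.count_append, hcntB, hcnt_x] at hcw
    omega
  omega

end Core
end StuProof

namespace StuProof
open List

section CntHelpers
variable {u : ℕ → Bool}

lemma cnt_split (u : ℕ → Bool) (p a b : ℕ) :
    (window u p (a + b)).count true
      = (window u p a).count true + (window u (p + a) b).count true := by
  rw [window_append, List.count_append]

lemma cnt_le (u : ℕ → Bool) (p k : ℕ) : (window u p k).count true ≤ k := by
  calc (window u p k).count true ≤ (window u p k).length := List.count_le_length
    _ = k := window_length u p k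

lemma cnt_one_le (u : ℕ → Bool) (p : ℕ) : (window u p 1).count true ≤ 1 := cnt_le u p 1

lemma cnt_one_true (u : ℕ → Bool) (p : ℕ) :
    (window u p 1).count true = 1 ↔ u p = true := by
  rw [window_one]
  cases hu : u p <;> simp

lemma cnt_one_false (u : ℕ → Bool) (p : ℕ) :
    (window u p 1).count true = 0 ↔ u p = false := by
  rw [window_one]
  cases hu : u p <;> simp

end CntHelpers

section Monster
variable {u : ℕ → Bool} (hp : ∀ n, complexity u n = n + 1)
include hp

lemma no_double (t : List Bool)
    (h0 : IsFactor u (false :: (t ++ [false])))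
    (h1 : IsFactor u (true :: (t ++ [true]))) : False := by
  obtain ⟨R, ⟨hRmem, hRrs⟩, -⟩ := exists_unique_RS hp (t.length + 1)
  obtain ⟨hRlen, hRwin⟩ := mem_factorsOfLen.1 hRmem
  cases R with
  | nil => simp at hRlen
  | cons rh rt =>
    have hrtlen : rt.length = t.length := by
      simp only [List.length_cons] at hRlen
      omega
    have hRfac : IsFactor u (rh :: rt) := by
      obtain ⟨i, hi⟩ := hRwin
      exact ⟨i, by rw [hRlen]; exact hi⟩
    have hrtRS : isRS u rt :=
      ⟨isFactor_infix hRrs.1 ⟨[rh], [], by simp⟩,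
       isFactor_infix hRrs.2 ⟨[rh], [], by simp⟩⟩
    have htRS : isRS u t :=
      ⟨isFactor_infix h0 ⟨[false], [], by simp⟩,
       isFactor_infix h1 ⟨[true], [], by simp⟩⟩
    have hrtfac : IsFactor u rt := by
      have := isFactor_drop hRfac 1
      simpa using this
    have htfac : IsFactor u t := isFactor_infix h0 ⟨[false], [false], by simp⟩
    have hrt_t : rt = t :=
      isRS_eq hp (mem_factorsOfLen.2 ⟨hrtlen, by
          obtain ⟨i, hi⟩ := hrtfac
          exact ⟨i, by rwa [hrtlen] at hi⟩⟩)
        (mem_factorsOfLen.2 ⟨rfl, by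
          obtain ⟨i, hi⟩ := htfac
          exact ⟨i, hi⟩⟩) hrtRS htRS
    subst hrt_t
    cases rh with
    | true =>
      exact core_contradiction hp true rt
        (by exact h1) (by exact h0) hRrs
    | false =>
      exact core_contradiction hp false rt
        (by exact h0) (by exact h1) hRrs

/-- Sturmian words are 1-balanced. -/
lemma sturmian_balanced :
    ∀ n i j, (window u i n).count true ≤ (window u j n).count true + 1 := by
  classical
  by_contra hun
  push_neg at hun
  have hex : ∃ n, ∃ i j, (window u j n).count true + 2 ≤ (window u i n).count true := by
    obtain ⟨n, i, j, hij⟩ := hun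
    exact ⟨n, i, j, by omega⟩
  obtain ⟨n, i, j, hij, hminc⟩ :
      ∃ n i j, ((window u j n).count true + 2 ≤ (window u i n).count true) ∧
        ∀ k, k < n → ∀ i' j',
          (window u i' k).count true ≤ (window u j' k).count true + 1 := by
    obtain ⟨i, j, hij⟩ := Nat.find_spec hex
    refine ⟨Nat.find hex, i, j, hij, ?_⟩
    intro k hk i' j'
    by_contra hcon
    push_neg at hcon
    exact Nat.find_min hex hk ⟨i', j', by omega⟩
  clear hex hun
  have hn2 : 2 ≤ n := by
    rcases Nat.lt_or_ge n 2 with h | h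
    · interval_cases n
      · rw [window_zero, window_zero] at hij
        simp at hij
      · have h1 := cnt_le u i 1
        omega
    · exact h
  have hsplitL : ∀ p, (window u p n).count true
      = (window u p 1).count true + (window u (p+1) (n-1)).count true := by
    intro p
    have := cnt_split u p 1 (n-1)
    rwa [show 1 + (n-1) = n by omega] at this
  have hsplitR : ∀ p, (window u p n).count true
      = (window u p (n-1)).count true + (window u (p + (n-1)) 1).count true := by
    intro p
    have := cnt_split u p (n-1) 1
    rwa [show n - 1 + 1 = n by omega] at this
  have h1L := hminc (n-1) (by omega) (i+1) (j+1)
  have h1R := hminc (n-1) (by omega) i j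
  have hcorner_i1 : (window u i 1).count true = 1 := by
    have l1 := hsplitL i
    have l2 := hsplitL j
    have b1 := cnt_one_le u i
    have b2 := cnt_one_le u j
    omega
  have hcorner_j1 : (window u j 1).count true = 0 := by
    have l1 := hsplitL i
    have l2 := hsplitL j
    have b1 := cnt_one_le u i
    have b2 := cnt_one_le u j
    omega
  have hcorner_i2 : (window u (i + (n-1)) 1).count true = 1 := by
    have l1 := hsplitR i
    have l2 := hsplitR j
    have b1 := cnt_one_le u (i + (n-1))
    have b2 := cnt_one_le u (j + (n-1))
    omega
  have hcorner_j2 : (window u (j + (n-1)) 1).count true = 0 := by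
    have l1 := hsplitR i
    have l2 := hsplitR j
    have b1 := cnt_one_le u (i + (n-1))
    have b2 := cnt_one_le u (j + (n-1))
    omega
  have hui : u i = true := (cnt_one_true u i).1 hcorner_i1
  have huj : u j = false := (cnt_one_false u j).1 hcorner_j1
  have hui2 : u (i + (n-1)) = true := (cnt_one_true u _).1 hcorner_i2
  have huj2 : u (j + (n-1)) = false := (cnt_one_false u _).1 hcorner_j2
  by_cases hteq : window u (i+1) (n-2) = window u (j+1) (n-2)
  · have hwi : window u i n = true :: (window u (i+1) (n-2) ++ [true]) := by
      have e1 : window u i n = u i :: window u (i+1) (n-1) := by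
        have := window_cons u i (n-1)
        rwa [show n - 1 + 1 = n by omega] at this
      have e2 : window u (i+1) (n-1)
          = window u (i+1) (n-2) ++ [u (i + 1 + (n-2))] := by
        have := window_succ u (i+1) (n-2)
        rwa [show n - 2 + 1 = n - 1 by omega] at this
      rw [e1, e2, hui, show i + 1 + (n-2) = i + (n-1) by omega, hui2]
    have hwj : window u j n = false :: (window u (i+1) (n-2) ++ [false]) := by
      have e1 : window u j n = u j :: window u (j+1) (n-1) := by
        have := window_cons u j (n-1)
        rwa [show n - 1 + 1 = n by omega] at this
      have e2 : window u (j+1) (n-1)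
          = window u (j+1) (n-2) ++ [u (j + 1 + (n-2))] := by
        have := window_succ u (j+1) (n-2)
        rwa [show n - 2 + 1 = n - 1 by omega] at this
      rw [e1, e2, huj, show j + 1 + (n-2) = j + (n-1) by omega, huj2, hteq]
    apply no_double hp (window u (i+1) (n-2))
    · rw [← hwj]
      exact ⟨j, by rw [window_length]⟩
    · rw [← hwi]
      exact ⟨i, by rw [window_length]⟩
  · have hexd : ∃ d, d < n - 2 ∧ u (i + 1 + d) ≠ u (j + 1 + d) := by
      by_contra hcon
      push_neg at hcon
      apply hteq
      apply List.ext_getElem (by simp)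
      intro d hd1 hd2
      simp only [window_length] at hd1
      rw [window_get _ _ _ _ hd1, window_get _ _ _ _ hd1]
      exact hcon d hd1
    obtain ⟨dd, ⟨hddlt, hddne⟩, hddmin0⟩ :
        ∃ d, (d < n - 2 ∧ u (i + 1 + d) ≠ u (j + 1 + d)) ∧
          ∀ d', d' < d → ¬(d' < n - 2 ∧ u (i + 1 + d') ≠ u (j + 1 + d')) :=
      ⟨Nat.find hexd, Nat.find_spec hexd, fun d' hd' => Nat.find_min hexd hd'⟩
    have hddmin : ∀ d', d' < dd → u (i + 1 + d') = u (j + 1 + d') := by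
      intro d' hd'
      have := hddmin0 d' hd'
      push_neg at this
      rcases Nat.lt_or_ge d' (n-2) with h | h
      · exact this h
      · omega
    have hpre : window u (i+1) dd = window u (j+1) dd := by
      apply List.ext_getElem (by simp)
      intro d hd1 hd2
      simp only [window_length] at hd1
      rw [window_get _ _ _ _ hd1, window_get _ _ _ _ hd1]
      exact hddmin d hd1
    have hcP : (window u (i+1) dd).count true = (window u (j+1) dd).count true := by
      rw [hpre]
    have hsp2 : ∀ p, (window u p (dd+2)).count true
        = (window u p 1).count true + (window u (p+1) dd).count true
          + (window u (p + 1 + dd) 1).count true := by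
      intro p
      have e1 : (window u p (dd+2)).count true
          = (window u p 1).count true + (window u (p+1) (dd+1)).count true := by
        have := cnt_split u p 1 (dd+1)
        rwa [show 1 + (dd+1) = dd+2 by omega] at this
      have e2 := cnt_split u (p+1) dd 1
      omega
    cases hbit : u (i + 1 + dd) with
    | true =>
      have hbitj : u (j + 1 + dd) = false := by
        cases hb : u (j + 1 + dd)
        · rfl
        · rw [hbit, hb] at hddne
          exact absurd rfl hddne
      have hc1 : (window u (i + 1 + dd) 1).count true = 1 := (cnt_one_true u _).2 hbit
      have hc2 : (window u (j + 1 + dd) 1).count true = 0 := (cnt_one_false u _).2 hbitj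
      have hmm := hminc (dd+2) (by omega) i j
      have si := hsp2 i
      have sj := hsp2 j
      have li := hsplitL i
      have lj := hsplitL j
      -- need counts of full windows to connect : use hij and prefix bound
      omega
    | false =>
      have hbitj : u (j + 1 + dd) = true := by
        cases hb : u (j + 1 + dd)
        · rw [hbit, hb] at hddne
          exact absurd rfl hddne
        · rfl
      have hc1 : (window u (i + 1 + dd) 1).count true = 0 := (cnt_one_false u _).2 hbit
      have hc2 : (window u (j + 1 + dd) 1).count true = 1 := (cnt_one_true u _).2 hbitj
      have hsufi : (window u i n).count true
          = (window u i (dd+2)).count true + (window u (i + (dd+2)) (n - dd - 2)).count true := by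
        have := cnt_split u i (dd+2) (n - dd - 2)
        rwa [show dd + 2 + (n - dd - 2) = n by omega] at this
      have hsufj : (window u j n).count true
          = (window u j (dd+2)).count true + (window u (j + (dd+2)) (n - dd - 2)).count true := by
        have := cnt_split u j (dd+2) (n - dd - 2)
        rwa [show dd + 2 + (n - dd - 2) = n by omega] at this
      have hmm := hminc (n - dd - 2) (by omega) (i + (dd+2)) (j + (dd+2))
      have si := hsp2 i
      have sj := hsp2 j
      omega

end Monster
end StuProof

namespace StuProof
open List

def fpos (l₀ l : ℕ) (ε : ℕ → ℕ) : ℕ → ℕ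
  | 0 => l₀
  | k+1 => fpos l₀ l ε k + (l + 1 + ε (k+1))

section Struct
variable (l₀ l : ℕ) (ε : ℕ → ℕ)

lemma fpos_succ (k : ℕ) : fpos l₀ l ε (k+1) = fpos l₀ l ε k + (l + 1 + ε (k+1)) := rfl

lemma fpos_zero : fpos l₀ l ε 0 = l₀ := rfl

lemma fpos_strictMono : StrictMono (fpos l₀ l ε) :=
  strictMono_nat_of_lt_succ (fun k => by rw [fpos_succ]; omega)

lemma fpos_mono {k k' : ℕ} (h : k ≤ k') : fpos l₀ l ε k ≤ fpos l₀ l ε k' :=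
  (fpos_strictMono l₀ l ε).monotone h

lemma fpos_ge (k : ℕ) : k ≤ fpos l₀ l ε k := by
  induction k with
  | zero => exact Nat.zero_le _
  | succ k ih => rw [fpos_succ]; omega

lemma sturmPrefix_zero : sturmPrefix l₀ l ε 0 = List.replicate l₀ true ++ [false] := by
  simp [sturmPrefix]

lemma sturmPrefix_succ (n : ℕ) : sturmPrefix l₀ l ε (n+1)
    = sturmPrefix l₀ l ε n ++ (List.replicate (l + ε (n+1)) true ++ [false]) := by
  simp [sturmPrefix, List.range_succ]

lemma sturmPrefix_length (n : ℕ) :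
    (sturmPrefix l₀ l ε n).length = fpos l₀ l ε n + 1 := by
  induction n with
  | zero => rw [sturmPrefix_zero]; simp [fpos]
  | succ n ih =>
    rw [sturmPrefix_succ, List.length_append, ih, fpos_succ]
    simp
    omega

lemma window_eq_replicate_iff {v : ℕ → Bool} (i n : ℕ) :
    window v i n = List.replicate n true ↔ ∀ d, d < n → v (i + d) = true := by
  constructor
  · intro h d hd
    have h2 := List.getElem_of_eq h (show d < (window v i n).length by simpa using hd)
    rw [List.getElem_replicate] at h2
    rw [← window_get v i n d hd]
    exact h2
  · intro h
    apply List.ext_getElem (by simp)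
    intro d hd1 hd2
    simp only [window_length] at hd1
    rw [window_get v i n d hd1, List.getElem_replicate]
    exact h d hd1

variable {v : ℕ → Bool}
variable (hv : ∀ n : ℕ, sturmPrefix l₀ l ε n = window v 0 (sturmPrefix l₀ l ε n).length)

include hv

lemma base_split : window v 0 l₀ = List.replicate l₀ true ∧ v l₀ = false := by
  have h0 := hv 0
  rw [sturmPrefix_length] at h0
  rw [sturmPrefix_zero] at h0
  rw [fpos_zero] at h0
  rw [window_append v 0 l₀ 1, window_one] at h0
  simp only [Nat.zero_add] at h0
  have hlen : (List.replicate l₀ (true : Bool)).length = (window v 0 l₀).length := by simp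
  obtain ⟨h1, h2⟩ := List.append_inj h0 (by simpa using hlen.symm)
  refine ⟨h1.symm, ?_⟩
  have := (List.cons_eq_cons.mp h2).1
  exact this.symm

lemma block_split (n : ℕ) :
    window v (fpos l₀ l ε n + 1) (l + ε (n+1)) = List.replicate (l + ε (n+1)) true ∧
    v (fpos l₀ l ε (n+1)) = false := by
  have h1 := hv (n+1)
  have h2 := hv n
  rw [sturmPrefix_length] at h1 h2
  rw [sturmPrefix_succ] at h1
  have hsum : fpos l₀ l ε (n+1) + 1 = (fpos l₀ l ε n + 1) + (l + ε (n+1) + 1) := by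
    rw [fpos_succ]; omega
  rw [hsum, window_append v 0 (fpos l₀ l ε n + 1) (l + ε (n+1) + 1)] at h1
  simp only [Nat.zero_add] at h1
  rw [← h2] at h1
  have h3 := List.append_cancel_left h1
  -- h3 : replicate (l+ε) true ++ [false] = window v (fpos n + 1) (l + ε + 1)
  rw [window_append v (fpos l₀ l ε n + 1) (l + ε (n+1)) 1, window_one] at h3
  obtain ⟨h4, h5⟩ := List.append_inj h3 (by simp)
  constructor
  · exact h4.symm
  · have h6 := (List.cons_eq_cons.mp h5).1
    rw [show fpos l₀ l ε (n+1) = fpos l₀ l ε n + 1 + (l + ε (n+1)) by rw [fpos_succ]; omega]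
    exact h6.symm

lemma v_fpos_false (k : ℕ) : v (fpos l₀ l ε k) = false := by
  cases k with
  | zero => exact (base_split l₀ l ε hv).2
  | succ n => exact (block_split l₀ l ε hv n).2

lemma v_run_true (k d : ℕ) (hd : d < l + ε (k+1)) : v (fpos l₀ l ε k + 1 + d) = true := by
  have h := (block_split l₀ l ε hv k).1
  rw [window_eq_replicate_iff] at h
  exact h d hd

lemma v_base_true (d : ℕ) (hd : d < l₀) : v d = true := by
  have h := (base_split l₀ l ε hv).1
  rw [window_eq_replicate_iff] at h
  have := h d hd
  simpa using this

lemma v_false_iff (p : ℕ) : v p = false ↔ ∃ k, fpos l₀ l ε k = p := by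
  classical
  constructor
  · intro hf
    by_contra hno
    push_neg at hno
    -- p is in a run, so v p = true
    have hptrue : v p = true := by
      rcases Nat.lt_or_ge p l₀ with h | h
      · exact v_base_true l₀ l ε hv p h
      · have hl₀p : l₀ < p := by
          rcases Nat.eq_or_lt_of_le h with he | hlt
          · exact absurd (by rw [fpos_zero, he]) (hno 0)
          · omega
        set k := Nat.findGreatest (fun k => fpos l₀ l ε k < p) p with hk
        have hspec : fpos l₀ l ε k < p := by
          apply Nat.findGreatest_spec (P := fun k => fpos l₀ l ε k < p) (Nat.zero_le p)
          show fpos l₀ l ε 0 < p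
          rw [fpos_zero]
          exact hl₀p
        have hk1le : k + 1 ≤ p := by
          have := fpos_ge l₀ l ε k
          omega
        have hnext : ¬ fpos l₀ l ε (k+1) < p := by
          apply Nat.findGreatest_is_greatest (P := fun k => fpos l₀ l ε k < p) (n := p)
          · rw [← hk]; omega
          · exact hk1le
        have hne : fpos l₀ l ε (k+1) ≠ p := hno (k+1)
        have hgap := fpos_succ l₀ l ε k
        have hd : p - (fpos l₀ l ε k + 1) < l + ε (k+1) := by omega
        have := v_run_true l₀ l ε hv k _ hd
        rwa [show fpos l₀ l ε k + 1 + (p - (fpos l₀ l ε k + 1)) = p by omega] at this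
    rw [hptrue] at hf
    simp at hf
  · rintro ⟨k, rfl⟩
    exact v_fpos_false l₀ l ε hv k

lemma v_true_iff (p : ℕ) : v p = true ↔ ∀ k, fpos l₀ l ε k ≠ p := by
  constructor
  · intro h k hk
    have hf := v_fpos_false l₀ l ε hv k
    rw [hk, h] at hf
    simp at hf
  · intro h
    cases hb : v p with
    | false =>
      obtain ⟨k, hk⟩ := (v_false_iff l₀ l ε hv p).1 hb
      exact absurd hk (h k)
    | true => rfl

end Struct

section WChar
variable (l₀ l : ℕ) (ε : ℕ → ℕ) {v : ℕ → Bool}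

lemma caW_true_iff (i : ℕ) :
    caFInf (sturmRule l) (l+1) v i = true ↔ ∀ d, d < l + 1 → v (i + d) = true := by
  show (if window v i (l+1) = List.replicate (l+1) true then true else false) = true ↔ _
  rw [← window_eq_replicate_iff]
  split
  · simpa
  · simpa

variable (hε : ∀ i, ε i ≤ 1) (hl₀ : l₀ ≤ l + 1)
variable (hv : ∀ n : ℕ, sturmPrefix l₀ l ε n = window v 0 (sturmPrefix l₀ l ε n).length)

include hε hl₀ hv

lemma W_char (i : ℕ) :
    caFInf (sturmRule l) (l+1) v i = true ↔
      ((i = 0 ∧ l₀ = l + 1) ∨ ∃ k, fpos l₀ l ε k + 1 = i ∧ ε (k+1) = 1) := by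
  classical
  rw [caW_true_iff]
  constructor
  · intro hall
    have hnof : ∀ k, ¬(i ≤ fpos l₀ l ε k ∧ fpos l₀ l ε k ≤ i + l) := by
      rintro k ⟨hk1, hk2⟩
      have hvf : v (fpos l₀ l ε k) = false := (v_false_iff l₀ l ε hv _).2 ⟨k, rfl⟩
      have := hall (fpos l₀ l ε k - i) (by omega)
      rw [show i + (fpos l₀ l ε k - i) = fpos l₀ l ε k by omega] at this
      rw [this] at hvf
      simp at hvf
    rcases Nat.eq_zero_or_pos i with rfl | hipos
    · left
      refine ⟨rfl, ?_⟩
      have h0 := hnof 0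
      rw [fpos_zero] at h0
      omega
    · right
      have hl₀lt : l₀ < i := by
        have h0 := hnof 0
        rw [fpos_zero] at h0
        omega
      set k := Nat.findGreatest (fun k => fpos l₀ l ε k < i) i with hk
      have hspec : fpos l₀ l ε k < i := by
        apply Nat.findGreatest_spec (P := fun k => fpos l₀ l ε k < i) (Nat.zero_le i)
        show fpos l₀ l ε 0 < i
        rw [fpos_zero]
        exact hl₀lt
      have hk1le : k + 1 ≤ i := by
        have := fpos_ge l₀ l ε k
        omega
      have hgt : ¬ fpos l₀ l ε (k+1) < i := by
        apply Nat.findGreatest_is_greatest (P := fun k => fpos l₀ l ε k < i) (n := i)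
        · rw [← hk]; omega
        · exact hk1le
      have hbig : i + l + 1 ≤ fpos l₀ l ε (k+1) := by
        have := hnof (k+1)
        omega
      have hgap := fpos_succ l₀ l ε k
      have hεk := hε (k+1)
      exact ⟨k, by omega, by omega⟩
  · intro hcase d hd
    rw [v_true_iff l₀ l ε hv]
    intro k' hk'
    rcases hcase with ⟨rfl, hll⟩ | ⟨k, hk1, hk2⟩
    · have : l₀ ≤ fpos l₀ l ε k' := fpos_mono l₀ l ε (Nat.zero_le k')
      omega
    · have hgap := fpos_succ l₀ l ε k
      rcases Nat.lt_or_ge k' (k+1) with h | h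
      · have : fpos l₀ l ε k' ≤ fpos l₀ l ε k := fpos_mono l₀ l ε (by omega)
        omega
      · have : fpos l₀ l ε (k+1) ≤ fpos l₀ l ε k' := fpos_mono l₀ l ε h
        omega

lemma l_pos (haa : IsFactor v [true, true]) : 1 ≤ l := by
  classical
  by_contra hl
  have hl0 : l = 0 := by omega
  obtain ⟨i, hi⟩ := haa
  have hwin : window v i 2 = [v i, v (i+1)] := by
    simp [window, List.range_succ]
  rw [show ([true, true] : List Bool).length = 2 from rfl, hwin] at hi
  have hvi : v i = true := ((List.cons_eq_cons.mp hi).1).symm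
  have hvi1 : v (i+1) = true :=
    ((List.cons_eq_cons.mp ((List.cons_eq_cons.mp hi).2)).1).symm
  set k := Nat.findGreatest (fun k => fpos l₀ l ε k ≤ i + 1) (i+1) with hk
  have hspec : fpos l₀ l ε k ≤ i + 1 := by
    apply Nat.findGreatest_spec (P := fun k => fpos l₀ l ε k ≤ i + 1) (Nat.zero_le (i+1))
    show fpos l₀ l ε 0 ≤ i + 1
    rw [fpos_zero]
    omega
  have hgap := fpos_succ l₀ l ε k
  have hεk := hε (k+1)
  have hge : i ≤ fpos l₀ l ε k := by
    rcases Nat.lt_or_ge (k+1) (i+2) with hsm | hbg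
    · have hgt : ¬ fpos l₀ l ε (k+1) ≤ i + 1 := by
        apply Nat.findGreatest_is_greatest (P := fun k => fpos l₀ l ε k ≤ i + 1) (n := i + 1)
        · rw [← hk]; omega
        · omega
      omega
    · have h1 := fpos_ge l₀ l ε k
      omega
  have hff : v (fpos l₀ l ε k) = false := v_fpos_false l₀ l ε hv _
  rcases Nat.eq_or_lt_of_le hge with he | hlt
  · rw [← he, hvi] at hff
    simp at hff
  · have he1 : fpos l₀ l ε k = i + 1 := by omega
    rw [he1, hvi1] at hff
    simp at hff

end WChar
end StuProof

namespace StuProof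
open List

/-- Sum of `δ` over the window `[a, a+r)`. -/
def Sd (δ : ℕ → ℕ) (a r : ℕ) : ℕ := (window δ a r).sum

section SdLemmas
variable (δ : ℕ → ℕ)

lemma Sd_zero (a : ℕ) : Sd δ a 0 = 0 := by simp [Sd, window_zero]

lemma Sd_succ (a r : ℕ) : Sd δ a (r+1) = Sd δ a r + δ (a + r) := by
  rw [Sd, Sd, window_succ, List.sum_append]
  simp

lemma Sd_cons (a r : ℕ) : Sd δ a (r+1) = δ a + Sd δ (a+1) r := by
  rw [Sd, Sd, window_cons, List.sum_cons]

lemma Sd_split (a r1 r2 : ℕ) : Sd δ a (r1 + r2) = Sd δ a r1 + Sd δ (a + r1) r2 := by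
  rw [Sd, Sd, Sd, window_append, List.sum_append]

lemma Sd_mono (a : ℕ) {r r' : ℕ} (h : r ≤ r') : Sd δ a r ≤ Sd δ a r' := by
  have : r' = r + (r' - r) := by omega
  rw [this, Sd_split]
  omega

lemma Sd_le (hδ : ∀ k, δ k ≤ 1) (a r : ℕ) : Sd δ a r ≤ r := by
  induction r with
  | zero => rw [Sd_zero]
  | succ r ih =>
    rw [Sd_succ]
    have := hδ (a + r)
    omega

lemma Sd_zero_of (a r : ℕ) (h : ∀ s, s < r → δ (a + s) = 0) : Sd δ a r = 0 := by
  induction r with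
  | zero => rw [Sd_zero]
  | succ r ih =>
    rw [Sd_succ, ih (fun s hs => h s (by omega)), h r (by omega)]

end SdLemmas

section Count
variable {l : ℕ} {δ H : ℕ → ℕ}
variable (hl : 1 ≤ l) (hδ : ∀ k, δ k ≤ 1)
variable (hHs : ∀ k, H (k+1) = H k + (l + 1 + δ k))

include hHs

lemma H_strictMono : StrictMono H :=
  strictMono_nat_of_lt_succ (fun k => by rw [hHs]; omega)

lemma H_ge (k : ℕ) : k ≤ H k := by
  induction k with
  | zero => exact Nat.zero_le _
  | succ k ih => rw [hHs]; omega

lemma H_add (k r : ℕ) : H (k + r) = H k + (r * (l+1) + Sd δ k r) := by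
  induction r with
  | zero => rw [Sd_zero]; simp
  | succ r ih =>
    rw [show k + (r+1) = (k + r) + 1 by omega, hHs, ih, Sd_succ]
    ring

end Count

section MainCount
variable {l : ℕ} {δ H : ℕ → ℕ} {W : ℕ → Bool}
variable (hl : 1 ≤ l) (hδ : ∀ k, δ k ≤ 1) (hH0 : H 0 ≤ l + 1)
variable (hHs : ∀ k, H (k+1) = H k + (l + 1 + δ k))
variable (hW : ∀ p, W p = true ↔ ∃ k, δ k = 1 ∧ H k = p)

include hδ hHs hW

/-- The count of trues in a window of `W` equals a `δ`-sum over the index interval. -/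
lemma count_window_eq (aex : ∀ x, ∃ k, x ≤ H k) :
    ∀ n i, (window W i n).count true
      = Sd δ (Nat.find (aex i)) (Nat.find (aex (i+n)) - Nat.find (aex i)) := by
  have hmono : StrictMono H := H_strictMono hHs
  have haH : ∀ x, x ≤ H (Nat.find (aex x)) := fun x => Nat.find_spec (aex x)
  have hamin : ∀ x k, x ≤ H k → Nat.find (aex x) ≤ k := fun x k h => Nat.find_min' (aex x) h
  have hamono : ∀ x y, x ≤ y → Nat.find (aex x) ≤ Nat.find (aex y) := by
    intro x y hxy
    exact hamin x _ (le_trans hxy (haH y))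
  have hastep : ∀ x, (H (Nat.find (aex x)) = x → Nat.find (aex (x+1)) = Nat.find (aex x) + 1)
      ∧ (H (Nat.find (aex x)) ≠ x → Nat.find (aex (x+1)) = Nat.find (aex x)) := by
    intro x
    constructor
    · intro he
      apply Nat.le_antisymm
      · apply hamin
        have : H (Nat.find (aex x)) < H (Nat.find (aex x) + 1) := hmono (by omega)
        omega
      · by_contra hc
        push_neg at hc
        have h1 : Nat.find (aex (x+1)) ≤ Nat.find (aex x) := by omega
        have h2 := haH (x+1)
        have h3 : H (Nat.find (aex (x+1))) ≤ H (Nat.find (aex x)) := hmono.monotone h1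
        omega
    · intro hne
      apply Nat.le_antisymm
      · apply hamin
        have := haH x
        omega
      · exact hamono x (x+1) (by omega)
  intro n
  induction n with
  | zero =>
    intro i
    simp [window_zero, Sd_zero]
  | succ n ih =>
    intro i
    have hcnt : (window W i (n+1)).count true
        = (window W i n).count true + (if W (i+n) = true then 1 else 0) := by
      rw [window_succ, List.count_append]
      cases hb : W (i + n) <;> simp [hb]
    rw [hcnt, ih i]
    set ai := Nat.find (aex i) with hai
    set an := Nat.find (aex (i+n)) with han
    have hain : ai ≤ an := hamono i (i+n) (by omega)
    rcases Classical.em (H an = i + n) with he | hne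
    · have hstep := (hastep (i+n)).1 he
      rw [show i + (n+1) = (i+n) + 1 by omega, hstep]
      have hr : an + 1 - ai = (an - ai) + 1 := by omega
      rw [hr, Sd_succ]
      have haddan : ai + (an - ai) = an := by omega
      rw [haddan]
      -- W (i+n) = true ↔ δ an = 1
      have hWval : (if W (i+n) = true then 1 else 0) = δ an := by
        rcases Classical.em (δ an = 1) with h1 | h1
        · have : W (i+n) = true := (hW (i+n)).2 ⟨an, h1, he⟩
          rw [this, h1]
          simp
        · have h0 : δ an = 0 := by have := hδ an; omega
          have : W (i+n) = false := by
            cases hb : W (i+n) with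
            | false => rfl
            | true =>
              obtain ⟨k, hk1, hk2⟩ := (hW (i+n)).1 hb
              have : k = an := by
                rcases lt_trichotomy k an with h | h | h
                · have := hmono h; omega
                · exact h
                · have := hmono h; omega
              rw [this] at hk1
              omega
          rw [this, h0]
          simp
      omega
    · have hstep := (hastep (i+n)).2 hne
      rw [show i + (n+1) = (i+n) + 1 by omega, hstep]
      have hWval : W (i+n) = false := by
        cases hb : W (i+n) with
        | false => rfl
        | true =>
          obtain ⟨k, hk1, hk2⟩ := (hW (i+n)).1 hb
          have hkan : an ≤ k := hamin (i+n) k (by omega)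
          have h3 : H an ≤ H k := hmono.monotone hkan
          have h2 : i + n ≤ H an := haH (i+n)
          exfalso
          omega
      rw [hWval]
      simp
      rfl

/-- The main counting bound: any two equal-length windows of `W` differ by at most 2. -/
lemma count_bound (hl' : 1 ≤ l) (hH0' : H 0 ≤ l + 1)
    (hbal : ∀ r a b, 1 ≤ a → 1 ≤ b → Sd δ a r ≤ Sd δ b r + 1)
    (hcase : (δ 0 = 1 ∧ H 0 = 0) ∨ (∀ r a b, Sd δ a r ≤ Sd δ b r + 1)) :
    ∀ n i j, (window W i n).count true ≤ (window W j n).count true + 2 := by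
  have hmono : StrictMono H := H_strictMono hHs
  have aex : ∀ x, ∃ k, x ≤ H k := fun x => ⟨x, H_ge hHs x⟩
  have haH : ∀ x, x ≤ H (Nat.find (aex x)) := fun x => Nat.find_spec (aex x)
  have hamin : ∀ x k, x ≤ H k → Nat.find (aex x) ≤ k := fun x k h => Nat.find_min' (aex x) h
  have hamono : ∀ x y, x ≤ y → Nat.find (aex x) ≤ Nat.find (aex y) := by
    intro x y hxy
    exact hamin x _ (le_trans hxy (haH y))
  have haprev : ∀ x, 1 ≤ Nat.find (aex x) → H (Nat.find (aex x) - 1) < x := by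
    intro x h1
    by_contra hc
    push_neg at hc
    have := hamin x _ hc
    omega
  -- balance corollaries
  have P2a : ∀ r b, 1 ≤ b → Sd δ 0 r ≤ Sd δ b r + 2 := by
    intro r b hb
    rcases hcase with ⟨hδ0, -⟩ | hfull
    · rcases Nat.eq_zero_or_pos r with rfl | hr
      · rw [Sd_zero]; omega
      · have e1 : Sd δ 0 r = δ 0 + Sd δ 1 (r-1) := by
          have := Sd_cons δ 0 (r-1)
          rwa [show r - 1 + 1 = r by omega] at this
        have e2 : Sd δ 1 (r-1) ≤ Sd δ b (r-1) + 1 := hbal (r-1) 1 b le_rfl hb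
        have e3 : Sd δ b (r-1) ≤ Sd δ b r := Sd_mono δ b (by omega)
        omega
    · have := hfull r 0 b; omega
  have P2b : ∀ r b, 1 ≤ b → Sd δ b r ≤ Sd δ 0 r + 1 := by
    intro r b hb
    rcases hcase with ⟨hδ0, -⟩ | hfull
    · rcases Nat.eq_zero_or_pos r with rfl | hr
      · rw [Sd_zero, Sd_zero]
        omega
      · have e1 : Sd δ 0 r = δ 0 + Sd δ 1 (r-1) := by
          have := Sd_cons δ 0 (r-1)
          rwa [show r - 1 + 1 = r by omega] at this
        have e2 : Sd δ b r = δ b + Sd δ (b+1) (r-1) := by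
          have := Sd_cons δ b (r-1)
          rwa [show r - 1 + 1 = r by omega] at this
        have e3 : Sd δ (b+1) (r-1) ≤ Sd δ 1 (r-1) + 1 := hbal (r-1) (b+1) 1 (by omega) le_rfl
        have := hδ b
        omega
    · have := hfull r b 0; omega
  have P2' : ∀ r b, 1 ≤ b → Sd δ 0 (r+1) ≤ Sd δ b r + 2 := by
    intro r b hb
    rcases hcase with ⟨hδ0, -⟩ | hfull
    · have e1 : Sd δ 0 (r+1) = δ 0 + Sd δ 1 r := Sd_cons δ 0 r
      have e2 : Sd δ 1 r ≤ Sd δ b r + 1 := hbal r 1 b le_rfl hb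
      have := hδ 0
      omega
    · have e1 := Sd_succ δ 0 r
      have e2 := hfull r 0 b
      have := hδ (0 + r)
      omega
  intro n i j
  rw [count_window_eq hδ hHs hW aex n i, count_window_eq hδ hHs hW aex n j]
  set ai := Nat.find (aex i) with hai
  set an := Nat.find (aex (i+n)) with han
  set bi := Nat.find (aex j) with hbi
  set bn := Nat.find (aex (j+n)) with hbn
  have hain : ai ≤ an := hamono i (i+n) (by omega)
  have hbjn : bi ≤ bn := hamono j (j+n) (by omega)
  set R := an - ai with hR
  set r := bn - bi with hrr
  rcases Nat.lt_or_ge R (r + 2) with hRr | hRr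
  · -- Case A : R ≤ r + 1
    have hA : Sd δ ai R ≤ Sd δ ai r + 1 := by
      have h1 : Sd δ ai R ≤ Sd δ ai (r+1) := Sd_mono δ ai (by omega)
      have h2 := Sd_succ δ ai r
      have := hδ (ai + r)
      omega
    rcases Nat.eq_zero_or_pos ai with hai0 | hai1
    · -- ai = 0
      rcases Nat.eq_zero_or_pos bi with hbi0 | hbi1
      · -- both 0 : same start index
        rw [hai0, hbi0]
        have h1 : Sd δ 0 R ≤ Sd δ 0 (r+1) := Sd_mono δ 0 (by omega)
        have h2 := Sd_succ δ 0 r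
        have := hδ (0 + r)
        omega
      · rw [hai0]
        have h1 : Sd δ 0 R ≤ Sd δ 0 (r+1) := Sd_mono δ 0 (by omega)
        have h2 := P2' r bi hbi1
        omega
    · rcases Nat.eq_zero_or_pos bi with hbi0 | hbi1
      · rw [hbi0]
        have h2 := P2b r ai hai1
        omega
      · have h2 := hbal r ai bi hai1 hbi1
        omega
  · -- Case B : R ≥ r + 2
    have han1 : ai + R = an := by omega
    have hKa : H (ai + (r+1)) < i + n := by
      have h1 : ai + (r + 1) ≤ an - 1 := by omega
      have h2 : H (ai + (r+1)) ≤ H (an - 1) := hmono.monotone h1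
      have h3 : H (an - 1) < i + n := haprev (i+n) (by omega)
      omega
    have eA : H (ai + (r+1)) = H ai + ((r+1) * (l+1) + Sd δ ai (r+1)) := H_add hHs ai (r+1)
    have hHai : i ≤ H ai := haH i
    have hHbn : j + n ≤ H (bi + r) := by
      have := haH (j+n)
      rw [show bi + r = bn by omega]
      exact this
    rcases Nat.eq_zero_or_pos bi with hbi0 | hbi1
    · -- B2 : window at word start on j side
      have hjH0 : j ≤ H 0 := by
        have h0 : j ≤ H bi := haH j
        rw [hbi0] at h0
        exact h0
      have e0 : H (0 + r) = H 0 + (r * (l+1) + Sd δ 0 r) := H_add hHs 0 r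
      have eA' : H (ai + r) = H ai + (r * (l+1) + Sd δ ai r) := H_add hHs ai r
      have estep : H (ai + r + 1) = H (ai + r) + (l + 1 + δ (ai + r)) := hHs (ai + r)
      have hstep2 : H (ai + (r+1)) = H (ai + r + 1) := by rw [show ai + (r+1) = ai + r + 1 by omega]
      rw [hbi0] at hHbn
      -- Sd δ 0 r ≥ Sd δ ai r + (j + l + 2 - H 0)
      have hdiff : Sd δ ai r + j + l + 2 ≤ Sd δ 0 r + H 0 := by omega
      rcases hcase with ⟨hδ0, hH00⟩ | hfull
      · -- case (i) : contradiction
        exfalso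
        rcases Nat.eq_zero_or_pos ai with hA0 | hA1
        · rw [hA0] at hdiff
          omega
        · have := P2a r ai hA1
          omega
      · -- case (ii) residual
        have hb1 : Sd δ 0 r ≤ Sd δ ai r + 1 := hfull r 0 ai
        -- forces j = 0, H 0 = l + 1, and Sd δ 0 r = Sd δ ai r + 1
        have hj0 : j = 0 := by omega
        -- bound R ≤ r + 2
        have hR2 : R ≤ r + 2 := by
          by_contra hc
          push_neg at hc
          have hKa3 : H (ai + (r+2)) < i + n := by
            have h1 : ai + (r + 2) ≤ an - 1 := by omega
            have h2 : H (ai + (r+2)) ≤ H (an - 1) := hmono.monotone h1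
            have h3 : H (an - 1) < i + n := haprev (i+n) (by omega)
            omega
          have estep3 : H (ai + r + 2) = H (ai + r + 1) + (l + 1 + δ (ai + r + 1)) := hHs (ai + r + 1)
          have hstep3 : H (ai + (r+2)) = H (ai + r + 2) := by rw [show ai + (r+2) = ai + r + 2 by omega]
          omega
        have hReq : R = r + 2 := by omega
        rw [hbi0, hReq]
        have e1 : Sd δ ai (r+2) = Sd δ ai r + δ (ai + r) + δ (ai + r + 1) := by
          have h1 := Sd_succ δ ai (r+1)
          have h2 := Sd_succ δ ai r
          rw [show ai + (r+1) = ai + r + 1 by omega] at h1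
          rw [show r + 1 + 1 = r + 2 by omega] at h1
          omega
        have := hδ (ai + r)
        have := hδ (ai + r + 1)
        omega
    · -- B1 : bi ≥ 1
      have hHbprev : H (bi - 1) < j := haprev j hbi1
      have eB : H ((bi-1) + (r+1)) = H (bi-1) + ((r+1) * (l+1) + Sd δ (bi-1) (r+1)) :=
        H_add hHs (bi-1) (r+1)
      have hBeq : (bi - 1) + (r + 1) = bi + r := by omega
      rw [hBeq] at eB
      -- Sd δ (bi-1) (r+1) ≥ Sd δ ai (r+1) + 2
      have hkey : Sd δ ai (r+1) + 2 ≤ Sd δ (bi-1) (r+1) := by omega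
      rcases Nat.eq_zero_or_pos (bi - 1) with hb10 | hb11
      · -- bi = 1
        rcases Nat.eq_zero_or_pos ai with hA0 | hA1
        · exfalso
          rw [hb10, hA0] at hkey
          omega
        · rcases hcase with ⟨hδ0, hH00⟩ | hfull
          · -- case (i)
            have hbi1' : bi = 1 := by omega
            have hSd0 : Sd δ 0 (r+1) = δ 0 + Sd δ 1 r := Sd_cons δ 0 r
            -- bound R ≤ r + 2
            have hR2 : R ≤ r + 2 := by
              by_contra hc
              push_neg at hc
              have hKa3 : H (ai + (r+2)) < i + n := by
                have h1 : ai + (r + 2) ≤ an - 1 := by omega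
                have h2 : H (ai + (r+2)) ≤ H (an - 1) := hmono.monotone h1
                have h3 : H (an - 1) < i + n := haprev (i+n) (by omega)
                omega
              have estep3 : H (ai + r + 2) = H (ai + r + 1) + (l + 1 + δ (ai + r + 1)) :=
                hHs (ai + r + 1)
              have hstep3 : H (ai + (r+2)) = H (ai + r + 2) := by
                rw [show ai + (r+2) = ai + r + 2 by omega]
              have estep2 : H (ai + r + 1) = H (ai + r) + (l + 1 + δ (ai + r)) := hHs (ai + r)
              have eA2 : H (ai + r) = H ai + (r * (l+1) + Sd δ ai r) := H_add hHs ai r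
              have eB2 : H (0 + (r+1)) = H 0 + ((r+1) * (l+1) + Sd δ 0 (r+1)) := H_add hHs 0 (r+1)
              -- relate (r+1)*(l+1) and r*(l+1)
              have hmul : (r+1) * (l+1) = r * (l+1) + (l+1) := by ring
              rw [hb10] at eB
              -- upper bound : Sd δ 0 (r+1) ≤ Sd δ ai (r+1) + 2
              have hup : Sd δ 0 (r+1) ≤ Sd δ ai (r+1) + 2 := by
                have h1 : Sd δ 1 r ≤ Sd δ (ai+1) r + 1 := hbal r 1 (ai+1) le_rfl (by omega)
                have h2 : Sd δ ai (r+1) = δ ai + Sd δ (ai+1) r := Sd_cons δ ai r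
                have := hδ 0
                omega
              have hlow : Sd δ ai (r+1) + l + 3 ≤ Sd δ 0 (r+1) := by
                have estep1 : H (ai + (r+1)) = H (ai + r) + (l + 1 + δ (ai + r)) := by
                  rw [show ai + (r+1) = ai + r + 1 by omega]
                  exact hHs (ai + r)
                omega
              omega
            have hReq : R = r + 2 := by omega
            rw [hReq]
            rw [hb10] at hkey
            have e1 : Sd δ ai (r+2) = Sd δ ai (r+1) + δ (ai + r + 1) := by
              have := Sd_succ δ ai (r+1)
              rwa [show ai + (r+1) = ai + r + 1 by omega] at this
            have hd1 := hδ (ai + r + 1)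
            have hδ0' := hδ 0
            have hNj : Sd δ bi r = Sd δ 1 r := by rw [hbi1']
            omega
          · exfalso
            have := hfull (r+1) (bi-1) ai
            omega
      · rcases Nat.eq_zero_or_pos ai with hA0 | hA1
        · -- ai = 0, bi - 1 ≥ 1
          exfalso
          rcases hcase with ⟨hδ0, hH00⟩ | hfull
          · have e1 : Sd δ (bi-1) (r+1) = δ (bi-1) + Sd δ bi r := by
              have := Sd_cons δ (bi-1) r
              rwa [show bi - 1 + 1 = bi by omega] at this
            have e2 : Sd δ bi r ≤ Sd δ 1 r + 1 := hbal r bi 1 (by omega) le_rfl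
            have e3 : Sd δ 0 (r+1) = δ 0 + Sd δ 1 r := Sd_cons δ 0 r
            have := hδ (bi - 1)
            rw [hA0] at hkey
            omega
          · have := hfull (r+1) (bi-1) 0
            rw [hA0] at hkey
            omega
        · exfalso
          have := hbal (r+1) (bi-1) ai hb11 hA1
          omega

end MainCount
end StuProof

namespace StuProof
open List

section Eps
variable {ε : ℕ → ℕ}

lemma window_comp (u : ℕ → ℕ) (f : ℕ → Bool) (i n : ℕ) :
    window (fun k => f (u k)) i n = (window u i n).map f := by
  simp [window, List.map_map]

lemma complexity_boolize (hε : ∀ i, ε i ≤ 1) (n : ℕ) :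
    complexity (fun k => decide (ε k = 1)) n = complexity ε n := by
  classical
  have himg : factorsOfLen (fun k => decide (ε k = 1)) n
      = (List.map (fun a => decide (a = 1))) '' (factorsOfLen ε n) := by
    ext w
    constructor
    · intro hw
      obtain ⟨hl, i, rfl⟩ := mem_factorsOfLen.1 hw
      refine ⟨window ε i n, window_mem_factorsOfLen ε i n, ?_⟩
      rw [← window_comp]
    · rintro ⟨w', hw', rfl⟩
      obtain ⟨hl', i, rfl⟩ := mem_factorsOfLen.1 hw'
      rw [← window_comp]
      exact window_mem_factorsOfLen _ i n
  rw [complexity_eq_ncard, complexity_eq_ncard, himg]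
  apply Set.ncard_image_of_injOn
  intro w1 h1 w2 h2 he
  have key : ∀ w ∈ factorsOfLen ε n, (w.map (fun a => decide (a = 1))).map
      (fun b : Bool => if b then 1 else 0) = w := by
    intro w hw
    obtain ⟨hl, i, rfl⟩ := mem_factorsOfLen.1 hw
    rw [List.map_map]
    apply List.ext_getElem (by simp)
    intro d hd1 hd2
    simp only [List.getElem_map]
    simp only [window_length] at hd2
    rw [window_get ε i n d hd2]
    have := hε (i + d)
    interval_cases h : ε (i + d) <;> simp
  rw [← key w1 h1, ← key w2 h2, he]

lemma Sd_eq_count (ε : ℕ → ℕ) (hε : ∀ i, ε i ≤ 1) (a r : ℕ) :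
    Sd ε a r = (window (fun k => decide (ε k = 1)) a r).count true := by
  induction r with
  | zero => simp [Sd_zero, window_zero]
  | succ r ih =>
    rw [Sd_succ, window_succ, List.count_append, ih]
    have := hε (a + r)
    interval_cases h : ε (a + r) <;> simp

lemma eps_balance (hε : ∀ i, ε i ≤ 1) (hεSturm : ∀ n, complexity ε n = n + 1) :
    ∀ r a b, Sd ε a r ≤ Sd ε b r + 1 := by
  have hpe : ∀ n, complexity (fun k => decide (ε k = 1)) n = n + 1 := by
    intro n
    rw [complexity_boolize hε]
    exact hεSturm n
  intro r a b
  rw [Sd_eq_count ε hε, Sd_eq_count ε hε]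
  exact sturmian_balanced hpe r a b

/-- There are ones beyond any point. -/
lemma eps_ones_unbounded (hε : ∀ i, ε i ≤ 1) (hεSturm : ∀ n, complexity ε n = n + 1) :
    ∀ N, ∃ k, N ≤ k ∧ ε k = 1 := by
  intro N
  by_contra hno
  push_neg at hno
  have hzero : ∀ k, N ≤ k → ε k = 0 := by
    intro k hk
    have h1 := hno k hk
    have h2 := hε k
    omega
  have hper : ∀ k, N ≤ k → ε (k + 1) = ε k := by
    intro k hk
    rw [hzero k hk, hzero (k+1) (by omega)]
  have := complexity_le_of_evPeriodic ε N 1 (by omega) hper (N + 1)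
  rw [hεSturm (N+1)] at this
  omega

def IsGapPair (ε : ℕ → ℕ) (k k' : ℕ) : Prop :=
  k < k' ∧ ε k = 1 ∧ ε k' = 1 ∧ ∀ s, k < s → s < k' → ε s = 0

lemma next_one (hε : ∀ i, ε i ≤ 1) (hεSturm : ∀ n, complexity ε n = n + 1)
    (k : ℕ) (hk : ε k = 1) : ∃ k', IsGapPair ε k k' := by
  classical
  have hex : ∃ s, k < s ∧ ε s = 1 := by
    obtain ⟨s, hs1, hs2⟩ := eps_ones_unbounded hε hεSturm (k+1)
    exact ⟨s, by omega, hs2⟩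
  refine ⟨Nat.find hex, ?_, hk, (Nat.find_spec hex).2, ?_⟩
  · exact (Nat.find_spec hex).1
  · intro s hs1 hs2
    have := Nat.find_min hex hs2
    push_neg at this
    have h2 := this hs1
    have := hε s
    omega

/-- There exist two gap pairs (beyond index 1) with different gaps. -/
lemma two_gaps (hε : ∀ i, ε i ≤ 1) (hεSturm : ∀ n, complexity ε n = n + 1) :
    ∃ k1 k1' k2 k2', IsGapPair ε k1 k1' ∧ IsGapPair ε k2 k2' ∧
      1 ≤ k1 ∧ 1 ≤ k2 ∧ k1' - k1 < k2' - k2 := by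
  classical
  by_contra hno
  push_neg at hno
  -- all gaps of pairs starting at ≥ 1 are equal
  obtain ⟨k₀, hk₀1, hk₀2⟩ := eps_ones_unbounded hε hεSturm 1
  obtain ⟨k₀', hp₀⟩ := next_one hε hεSturm k₀ hk₀2
  set d := k₀' - k₀ with hd
  have hd1 : 1 ≤ d := by have := hp₀.1; omega
  have hall : ∀ k k', IsGapPair ε k k' → 1 ≤ k → k' - k = d := by
    intro k k' hp hk1
    have h1 := hno k k' k₀ k₀' hp hp₀ hk1 hk₀1
    have h2 := hno k₀ k₀' k k' hp₀ hp hk₀1 hk1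
    omega
  -- eventual periodicity with period d
  have hper : ∀ p, k₀ ≤ p → ε (p + d) = ε p := by
    intro p hp
    -- largest one ≤ p with index ≥ 1
    set k := Nat.findGreatest (fun k => ε k = 1 ∧ 1 ≤ k) p with hkdef
    have hkspec : ε k = 1 ∧ 1 ≤ k :=
      Nat.findGreatest_spec (P := fun k => ε k = 1 ∧ 1 ≤ k) hp ⟨hk₀2, hk₀1⟩
    have hkle : k ≤ p := Nat.findGreatest_le p
    have hkmax : ∀ s, k < s → s ≤ p → ¬(ε s = 1 ∧ 1 ≤ s) := by
      intro s hs1 hs2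
      apply Nat.findGreatest_is_greatest (P := fun k => ε k = 1 ∧ 1 ≤ k) (n := p)
      · rw [← hkdef]; omega
      · exact hs2
    obtain ⟨k', hpair⟩ := next_one hε hεSturm k hkspec.1
    have hk'd : k' = k + d := by
      have := hall k k' hpair hkspec.2
      have := hpair.1
      omega
    obtain ⟨k'', hpair2⟩ := next_one hε hεSturm k' hpair.2.2.1
    have hk''d : k'' = k' + d := by
      have := hall k' k'' hpair2 (by omega)
      have := hpair2.1
      omega
    have hplt : p < k + d := by
      by_contra hc
      push_neg at hc
      have h1 := hkmax (k + d) (by omega) (by omega)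
      rw [← hk'd] at h1
      exact h1 ⟨hpair.2.2.1, by omega⟩
    rcases Nat.eq_or_lt_of_le hkle with he | hlt
    · -- p = k
      have h1 : ε (k + d) = 1 := by rw [← hk'd]; exact hpair.2.2.1
      rw [← he, h1, hkspec.1]
    · -- k < p < k + d : both sides are 0
      have h1 : ε p = 0 := hpair.2.2.2 p hlt (by omega)
      have h2 : ε (p + d) = 0 := by
        apply hpair2.2.2.2
        · omega
        · omega
      rw [h1, h2]
  have := complexity_le_of_evPeriodic ε k₀ d (by omega) hper (k₀ + d)
  rw [hεSturm (k₀ + d)] at this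
  omega

end Eps
end StuProof

namespace StuProof
open List

lemma Sd_congr {δ δ' : ℕ → ℕ} (a r : ℕ) (h : ∀ s, s < r → δ (a + s) = δ' (a + s)) :
    Sd δ a r = Sd δ' a r := by
  induction r with
  | zero => rw [Sd_zero, Sd_zero]
  | succ r ih =>
    rw [Sd_succ, Sd_succ, ih (fun s hs => h s (by omega)), h r (by omega)]

lemma Sd_shift (ε : ℕ → ℕ) (a r : ℕ) : Sd (fun k => ε (k+1)) a r = Sd ε (a+1) r := by
  induction r with
  | zero => rw [Sd_zero, Sd_zero]
  | succ r ih =>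
    rw [Sd_succ, Sd_succ, ih]
    have he : a + r + 1 = a + 1 + r := by omega
    show Sd ε (a+1) r + ε (a + r + 1) = Sd ε (a+1) r + ε (a + 1 + r)
    rw [he]

lemma count_true_zero (W : ℕ → Bool) (i n : ℕ) (h : ∀ d, d < n → W (i + d) = false) :
    (window W i n).count true = 0 := by
  induction n with
  | zero => simp [window_zero]
  | succ n ih =>
    rw [window_succ, List.count_append, ih (fun d hd => h d (by omega)), h n (by omega)]
    simp

section Attain
variable {l : ℕ} {δ H : ℕ → ℕ} {W : ℕ → Bool}
variable (hδ : ∀ k, δ k ≤ 1)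
variable (hHs : ∀ k, H (k+1) = H k + (l + 1 + δ k))
variable (hW : ∀ p, W p = true ↔ ∃ k, δ k = 1 ∧ H k = p)

include hδ hHs hW

lemma attain_pair (hl : 1 ≤ l) (c1 c1' c2 c2' : ℕ)
    (hp1 : IsGapPair δ c1 c1') (hp2 : IsGapPair δ c2 c2')
    (hgap : c1' - c1 < c2' - c2) :
    ∃ i j n, (window W i n).count true = 2 ∧ (window W j n).count true = 0 := by
  classical
  have hmono : StrictMono H := H_strictMono hHs
  have aex : ∀ x, ∃ k, x ≤ H k := fun x => ⟨x, H_ge hHs x⟩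
  have haH : ∀ x, x ≤ H (Nat.find (aex x)) := fun x => Nat.find_spec (aex x)
  have hamin : ∀ x k, x ≤ H k → Nat.find (aex x) ≤ k := fun x k h => Nat.find_min' (aex x) h
  have a_H : ∀ k, Nat.find (aex (H k)) = k := by
    intro k
    apply Nat.le_antisymm
    · exact hamin (H k) k le_rfl
    · by_contra hc
      push_neg at hc
      have h1 : H (Nat.find (aex (H k))) < H k := hmono (by omega)
      have h2 := haH (H k)
      omega
  have a_Hsucc : ∀ k, Nat.find (aex (H k + 1)) = k + 1 := by
    intro k
    apply Nat.le_antisymm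
    · apply hamin
      have : H k < H (k + 1) := hmono (by omega)
      omega
    · by_contra hc
      push_neg at hc
      have h1 : H (Nat.find (aex (H k + 1))) ≤ H k := hmono.monotone (by omega)
      have h2 := haH (H k + 1)
      omega
  set e1 := c1' - c1 with he1
  set e2 := c2' - c2 with he2
  have he11 : 1 ≤ e1 := by have := hp1.1; omega
  have he21 : 1 ≤ e2 := by have := hp2.1; omega
  have hDle : H c1 ≤ H c1' := hmono.monotone (by omega)
  set D := H c1' - H c1 with hD
  -- first window has exactly two trues
  have hSd1 : Sd δ c1 e1 = 1 := by
    have h1 : Sd δ c1 e1 = δ c1 + Sd δ (c1+1) (e1 - 1) := by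
      have := Sd_cons δ c1 (e1 - 1)
      rwa [show e1 - 1 + 1 = e1 by omega] at this
    have h2 : Sd δ (c1+1) (e1 - 1) = 0 := by
      apply Sd_zero_of
      intro s hs
      exact hp1.2.2.2 (c1 + 1 + s) (by omega) (by omega)
    rw [h1, h2, hp1.2.1]
  have hcount1 : (window W (H c1) (D + 1)).count true = 2 := by
    rw [count_window_eq hδ hHs hW aex (D+1) (H c1)]
    rw [a_H c1]
    have hsum : H c1 + (D + 1) = H c1' + 1 := by omega
    rw [hsum, a_Hsucc c1']
    have hr : c1' + 1 - c1 = e1 + 1 := by omega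
    rw [hr, Sd_succ]
    rw [show c1 + e1 = c1' by omega]
    rw [hSd1, hp1.2.2.1]
  -- span of the second pair
  have hspan2 : H c2 + D + 2 ≤ H c2' := by
    have eD : H (c1 + e1) = H c1 + (e1 * (l+1) + Sd δ c1 e1) := H_add hHs c1 e1
    rw [show c1 + e1 = c1' by omega] at eD
    have eC : H (c2 + e1) = H c2 + (e1 * (l+1) + Sd δ c2 e1) := H_add hHs c2 e1
    have hSdc2 : 1 ≤ Sd δ c2 e1 := by
      have h1 : Sd δ c2 e1 = δ c2 + Sd δ (c2+1) (e1 - 1) := by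
        have := Sd_cons δ c2 (e1 - 1)
        rwa [show e1 - 1 + 1 = e1 by omega] at this
      rw [h1, hp2.2.1]
      omega
    have estep : H (c2 + e1 + 1) = H (c2 + e1) + (l + 1 + δ (c2 + e1)) := hHs (c2 + e1)
    have hmle : H (c2 + e1 + 1) ≤ H (c2 + e2) := hmono.monotone (by omega)
    rw [show c2 + e2 = c2' by omega] at hmle
    omega
  have hcount2 : (window W (H c2 + 1) (D + 1)).count true = 0 := by
    apply count_true_zero
    intro d hd
    cases hb : W (H c2 + 1 + d) with
    | false => rfl
    | true =>
      exfalso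
      obtain ⟨k, hk1, hk2⟩ := (hW (H c2 + 1 + d)).1 hb
      have hkgt : c2 < k := by
        by_contra hc
        push_neg at hc
        have : H k ≤ H c2 := hmono.monotone hc
        omega
      have hklt : k < c2' := by
        by_contra hc
        push_neg at hc
        have : H c2' ≤ H k := hmono.monotone hc
        omega
      have := hp2.2.2.2 k hkgt hklt
      omega
  exact ⟨H c1, H c2 + 1, D + 1, hcount1, hcount2⟩

end Attain

lemma count_false_add_count_true : ∀ w : List Bool, w.count false + w.count true = w.length := by
  intro w
  induction w with
  | nil => simp
  | cons a t ih =>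
    cases a <;> simp [List.count_cons] <;> omega

end StuProof

namespace StuProof
open List

def delta1 (ε : ℕ → ℕ) : ℕ → ℕ
  | 0 => 1
  | (k+1) => ε (k+1)

def H1fun (l₀ l : ℕ) (ε : ℕ → ℕ) : ℕ → ℕ
  | 0 => 0
  | (k+1) => fpos l₀ l ε k + 1

@[simp] lemma delta1_zero (ε : ℕ → ℕ) : delta1 ε 0 = 1 := rfl
@[simp] lemma delta1_succ (ε : ℕ → ℕ) (k : ℕ) : delta1 ε (k+1) = ε (k+1) := rfl
@[simp] lemma H1fun_zero (l₀ l : ℕ) (ε : ℕ → ℕ) : H1fun l₀ l ε 0 = 0 := rfl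
@[simp] lemma H1fun_succ (l₀ l : ℕ) (ε : ℕ → ℕ) (k : ℕ) :
    H1fun l₀ l ε (k+1) = fpos l₀ l ε k + 1 := rfl

section Setup
variable (l₀ l : ℕ) (ε : ℕ → ℕ) {v : ℕ → Bool}
variable (hε : ∀ i, ε i ≤ 1) (hl₀ : l₀ ≤ l + 1)
variable (hv : ∀ n : ℕ, sturmPrefix l₀ l ε n = window v 0 (sturmPrefix l₀ l ε n).length)
variable (hεSturm : ∀ n, complexity ε n = n + 1)

include hε hl₀ hv hεSturm

lemma setup :
    ∃ δ H : ℕ → ℕ, (∀ k, δ k ≤ 1) ∧ H 0 ≤ l + 1 ∧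
      (∀ k, H (k+1) = H k + (l + 1 + δ k)) ∧
      (∀ p, caFInf (sturmRule l) (l+1) v p = true ↔ ∃ k, δ k = 1 ∧ H k = p) ∧
      (∀ r a b, 1 ≤ a → 1 ≤ b → Sd δ a r ≤ Sd δ b r + 1) ∧
      ((δ 0 = 1 ∧ H 0 = 0) ∨ (∀ r a b, Sd δ a r ≤ Sd δ b r + 1)) ∧
      (∃ c1 c1' c2 c2', IsGapPair δ c1 c1' ∧ IsGapPair δ c2 c2' ∧ c1' - c1 < c2' - c2) := by
  obtain ⟨k1, k1', k2, k2', hP1, hP2, hk11, hk21, hgaps⟩ := two_gaps hε hεSturm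
  have hbalε := eps_balance hε hεSturm
  have hW_char := W_char l₀ l ε hε hl₀ hv
  rcases Nat.eq_or_lt_of_le hl₀ with hle | hlt
  · -- Case l₀ = l + 1
    refine ⟨delta1 ε, H1fun l₀ l ε, ?_, ?_, ?_, ?_, ?_, ?_, ?_⟩
    · intro k
      cases k with
      | zero => simp
      | succ kk => rw [delta1_succ]; exact hε (kk+1)
    · rw [H1fun_zero]; omega
    · intro k
      cases k with
      | zero =>
        rw [H1fun_succ, H1fun_zero, delta1_zero, fpos_zero]
        omega
      | succ kk =>
        rw [H1fun_succ, H1fun_succ, delta1_succ, fpos_succ]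
        omega
    · intro p
      rw [hW_char p]
      constructor
      · rintro (⟨rfl, -⟩ | ⟨k, hk1, hk2⟩)
        · exact ⟨0, rfl, rfl⟩
        · exact ⟨k+1, hk2, hk1⟩
      · rintro ⟨k, h1, h2⟩
        cases k with
        | zero =>
          left
          rw [H1fun_zero] at h2
          exact ⟨h2.symm, hle⟩
        | succ kk =>
          right
          rw [H1fun_succ] at h2
          rw [delta1_succ] at h1
          exact ⟨kk, h2, h1⟩
    · intro r a b ha hb
      have hc : ∀ (c : ℕ), 1 ≤ c → ∀ s, s < r → delta1 ε (c + s) = ε (c + s) := by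
        intro c hcc s _
        obtain ⟨m, hm⟩ : ∃ m, c + s = m + 1 := ⟨c + s - 1, by omega⟩
        rw [hm, delta1_succ]
      rw [Sd_congr a r (hc a ha), Sd_congr b r (hc b hb)]
      exact hbalε r a b
    · left
      exact ⟨rfl, rfl⟩
    · refine ⟨k1, k1', k2, k2', ?_, ?_, hgaps⟩
      · obtain ⟨h1, h2, h3, h4⟩ := hP1
        refine ⟨h1, ?_, ?_, ?_⟩
        · obtain ⟨m, hm⟩ : ∃ m, k1 = m + 1 := ⟨k1 - 1, by omega⟩
          rw [hm, delta1_succ, ← hm]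
          exact h2
        · obtain ⟨m, hm⟩ : ∃ m, k1' = m + 1 := ⟨k1' - 1, by omega⟩
          rw [hm, delta1_succ, ← hm]
          exact h3
        · intro s hs1 hs2
          obtain ⟨m, hm⟩ : ∃ m, s = m + 1 := ⟨s - 1, by omega⟩
          rw [hm, delta1_succ, ← hm]
          exact h4 s hs1 hs2
      · obtain ⟨h1, h2, h3, h4⟩ := hP2
        refine ⟨h1, ?_, ?_, ?_⟩
        · obtain ⟨m, hm⟩ : ∃ m, k2 = m + 1 := ⟨k2 - 1, by omega⟩
          rw [hm, delta1_succ, ← hm]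
          exact h2
        · obtain ⟨m, hm⟩ : ∃ m, k2' = m + 1 := ⟨k2' - 1, by omega⟩
          rw [hm, delta1_succ, ← hm]
          exact h3
        · intro s hs1 hs2
          obtain ⟨m, hm⟩ : ∃ m, s = m + 1 := ⟨s - 1, by omega⟩
          rw [hm, delta1_succ, ← hm]
          exact h4 s hs1 hs2
  · -- Case l₀ < l + 1
    refine ⟨fun k => ε (k+1), fun k => fpos l₀ l ε k + 1, ?_, ?_, ?_, ?_, ?_, ?_, ?_⟩
    · intro k; exact hε (k+1)
    · show fpos l₀ l ε 0 + 1 ≤ l + 1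
      rw [fpos_zero]; omega
    · intro k
      show fpos l₀ l ε (k+1) + 1 = (fpos l₀ l ε k + 1) + (l + 1 + ε (k+1))
      rw [fpos_succ]
      omega
    · intro p
      rw [hW_char p]
      constructor
      · rintro (⟨rfl, hll⟩ | ⟨k, hk1, hk2⟩)
        · omega
        · exact ⟨k, hk2, hk1⟩
      · rintro ⟨k, h1, h2⟩
        right
        exact ⟨k, h2, h1⟩
    · intro r a b _ _
      rw [Sd_shift, Sd_shift]
      exact hbalε r (a+1) (b+1)
    · right
      intro r a b
      rw [Sd_shift, Sd_shift]
      exact hbalε r (a+1) (b+1)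
    · refine ⟨k1 - 1, k1' - 1, k2 - 1, k2' - 1, ?_, ?_, by
        have := hP1.1
        have := hP2.1
        omega⟩
      · obtain ⟨h1, h2, h3, h4⟩ := hP1
        refine ⟨by omega, ?_, ?_, ?_⟩
        · show ε (k1 - 1 + 1) = 1
          rw [show k1 - 1 + 1 = k1 by omega]
          exact h2
        · show ε (k1' - 1 + 1) = 1
          rw [show k1' - 1 + 1 = k1' by omega]
          exact h3
        · intro s hs1 hs2
          show ε (s + 1) = 0
          exact h4 (s+1) (by omega) (by omega)
      · obtain ⟨h1, h2, h3, h4⟩ := hP2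
        refine ⟨by omega, ?_, ?_, ?_⟩
        · show ε (k2 - 1 + 1) = 1
          rw [show k2 - 1 + 1 = k2 by omega]
          exact h2
        · show ε (k2' - 1 + 1) = 1
          rw [show k2' - 1 + 1 = k2' by omega]
          exact h3
        · intro s hs1 hs2
          show ε (s + 1) = 0
          exact h4 (s+1) (by omega) (by omega)

end Setup
end StuProof


open StuProof

theorem ca_sturmian_two_balanced (l₀ l : ℕ) (ε : ℕ → ℕ) (hε : ∀ i, ε i ≤ 1)
    (hεSturm : ∀ n, complexity ε n = n + 1)
    (hl₀ : l₀ ≤ l + 1)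
    (v : ℕ → Bool)
    (hv : ∀ n : ℕ, sturmPrefix l₀ l ε n = window v 0 (sturmPrefix l₀ l ε n).length)
    (hSturm : ∀ n, complexity v n = n + 1)
    (haa : IsFactor v [true, true]) :
    (∀ (x : Bool) (v₁ v₂ : List Bool),
      IsFactor (caFInf (sturmRule l) (l + 1) v) v₁ →
      IsFactor (caFInf (sturmRule l) (l + 1) v) v₂ →
      v₁.length = v₂.length →
      |(v₁.count x : ℤ) - (v₂.count x : ℤ)| ≤ 2) ∧
    (∃ (x : Bool) (v₁ v₂ : List Bool),
      IsFactor (caFInf (sturmRule l) (l + 1) v) v₁ ∧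
      IsFactor (caFInf (sturmRule l) (l + 1) v) v₂ ∧
      v₁.length = v₂.length ∧
      |(v₁.count x : ℤ) - (v₂.count x : ℤ)| = 2) := by
  classical
  have hl : 1 ≤ l := l_pos l₀ l ε hε hl₀ hv haa
  obtain ⟨δ, H, hδ, hH0, hHs, hW, hbal, hcase, c1, c1', c2, c2', hp1, hp2, hgap⟩ :=
    setup l₀ l ε hε hl₀ hv hεSturm
  have hbound := count_bound hδ hHs hW hl hH0 hbal hcase
  obtain ⟨ia, ja, na, hca, hcb⟩ := attain_pair hδ hHs hW hl c1 c1' c2 c2' hp1 hp2 hgap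
  constructor
  · intro x v₁ v₂ h1 h2 hlen
    obtain ⟨i, hi⟩ := h1
    obtain ⟨j, hj⟩ := h2
    have hj' : v₂ = window (caFInf (sturmRule l) (l + 1) v) j v₁.length := by
      rw [hlen]; exact hj
    have hb1 := hbound v₁.length i j
    have hb2 := hbound v₁.length j i
    have ht1 : v₁.count true ≤ v₂.count true + 2 := by
      rw [hi, hj']; exact hb1
    have ht2 : v₂.count true ≤ v₁.count true + 2 := by
      conv_lhs => rw [hj']
      conv_rhs => rw [hi]
      exact hb2
    have hf1 := count_false_add_count_true v₁
    have hf2 := count_false_add_count_true v₂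
    cases x with
    | true =>
      rw [abs_sub_le_iff]
      constructor <;> omega
    | false =>
      rw [abs_sub_le_iff]
      constructor <;> omega
  · refine ⟨true, window (caFInf (sturmRule l) (l + 1) v) ia na,
      window (caFInf (sturmRule l) (l + 1) v) ja na,
      isFactor_window _ _ _, isFactor_window _ _ _,
      by rw [window_length, window_length], ?_⟩
    rw [hca, hcb]
    norm_num
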